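/- arXiv:0806.3164 — 10 statements merged into one kernel-verified Lean document; each statement's English description precedes it below -/
import Mathlib

section
/- If r(t) is a non-negative eigenvalue of a density matrix ρ(t) evolving under a Lindblad equation with transition operators h_α (and any Hamiltonian H), then its time derivative satisfies ṙ(t) ≥ −(Σ_α ‖h_α‖²) r(t). -/
open Matrix
open scoped Matrix.Norms.L2Operator ComplexOrder

/-- The GKS--Lindblad generator with Hamiltonian `H` and transition operators `h α`. -/
noncomputable def lindblad {n : ℕ} {ι : Type*} [Fintype ι]
    (H : Matrix (Fin n) (Fin n) ℂ) (h : ι → Matrix (Fin n) (Fin n) ℂ)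
    (ρ : Matrix (Fin n) (Fin n) ℂ) : Matrix (Fin n) (Fin n) ℂ :=
  -Complex.I • (H * ρ - ρ * H) +
    ∑ α, (h α * ρ * (h α)ᴴ - (1/2 : ℂ) • ((h α)ᴴ * h α * ρ + ρ * ((h α)ᴴ * h α)))

section aux

variable {n : ℕ}

/-- The coercion of matrices into continuous linear maps on Euclidean space, as a
continuous linear map. -/
noncomputable def matCLM (n : ℕ) :
    Matrix (Fin n) (Fin n) ℂ →L[ℂ]
      (EuclideanSpace ℂ (Fin n) →L[ℂ] EuclideanSpace ℂ (Fin n)) :=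
  LinearMap.toContinuousLinearMap
    (Matrix.toEuclideanLin.trans LinearMap.toContinuousLinearMap).toLinearMap

/-- Real-scalar version for calculus. -/
noncomputable def matCLMR (n : ℕ) :
    Matrix (Fin n) (Fin n) ℂ →L[ℝ]
      (EuclideanSpace ℂ (Fin n) →L[ℝ] EuclideanSpace ℂ (Fin n)) :=
  LinearMap.toContinuousLinearMap
    { toFun := fun M => ((matCLM n M).restrictScalars ℝ)
      map_add' := by intro M N; ext x; simp
      map_smul' := by intro c M; ext x; simp }

lemma matCLMR_apply {n : ℕ} (M : Matrix (Fin n) (Fin n) ℂ) (x : EuclideanSpace ℂ (Fin n)) :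
    matCLMR n M x = Matrix.toEuclideanLin M x := rfl

lemma matCLM_apply (M : Matrix (Fin n) (Fin n) ℂ) (x : EuclideanSpace ℂ (Fin n)) :
    matCLM n M x = Matrix.toEuclideanLin M x := rfl

lemma matCLM_norm (M : Matrix (Fin n) (Fin n) ℂ) : ‖matCLM n M‖ = ‖M‖ := by
  rw [Matrix.l2_opNorm_def]; rfl

lemma toEL_mul (A B : Matrix (Fin n) (Fin n) ℂ) (x : EuclideanSpace ℂ (Fin n)) :
    Matrix.toEuclideanLin (A * B) x
      = Matrix.toEuclideanLin A (Matrix.toEuclideanLin B x) := by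
  rw [Matrix.toEuclideanLin_eq_toLin,
    Matrix.toLin_mul _ (PiLp.basisFun 2 ℂ (Fin n)) _]
  rfl

lemma inner_conjT_right (A : Matrix (Fin n) (Fin n) ℂ) (x y : EuclideanSpace ℂ (Fin n)) :
    (inner ℂ x (Matrix.toEuclideanLin Aᴴ y) : ℂ) = inner ℂ (Matrix.toEuclideanLin A x) y := by
  rw [Matrix.toEuclideanLin_conjTranspose_eq_adjoint, LinearMap.adjoint_inner_right]

lemma inner_conjT_left (A : Matrix (Fin n) (Fin n) ℂ) (x y : EuclideanSpace ℂ (Fin n)) :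
    (inner ℂ (Matrix.toEuclideanLin Aᴴ x) y : ℂ) = inner ℂ x (Matrix.toEuclideanLin A y) := by
  rw [Matrix.toEuclideanLin_conjTranspose_eq_adjoint, LinearMap.adjoint_inner_left]

lemma psd_inner_re_nonneg {M : Matrix (Fin n) (Fin n) ℂ} (hM : M.PosSemidef)
    (x : EuclideanSpace ℂ (Fin n)) :
    0 ≤ (inner ℂ x (Matrix.toEuclideanLin M x) : ℂ).re := by
  rw [EuclideanSpace.inner_eq_star_dotProduct, Matrix.ofLp_toEuclideanLin_apply, dotProduct_comm]
  exact hM.re_dotProduct_nonneg _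

end aux

/-- If `r t` is a non-negative eigenvalue of a density matrix `ρ t` evolving under a
Lindblad equation, then `ṙ(t) ≥ -(∑ α ‖h α‖²) r(t)` (operator norm). -/
theorem stmt0 {n : ℕ} {ι : Type*} [Fintype ι]
    (H : Matrix (Fin n) (Fin n) ℂ) (hH : H.IsHermitian)
    (h : ι → Matrix (Fin n) (Fin n) ℂ)
    (ρ : ℝ → Matrix (Fin n) (Fin n) ℂ)
    (hρ : ∀ t, (ρ t).PosSemidef ∧ (ρ t).trace = 1)
    (hρode : ∀ t, HasDerivAt ρ (lindblad H h (ρ t)) t)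
    (r r' : ℝ → ℝ) (hr : ∀ t, HasDerivAt r (r' t) t)
    (hrpos : ∀ t, 0 ≤ r t)
    (ψ ψ' : ℝ → EuclideanSpace ℂ (Fin n))
    (hψ : ∀ t, HasDerivAt ψ (ψ' t) t)
    (hψnorm : ∀ t, ‖ψ t‖ = 1)
    (hψorth : ∀ t, inner ℂ (ψ t) (ψ' t) = (0 : ℂ))
    (heig : ∀ t, Matrix.toEuclideanLin (ρ t) (ψ t) = (r t : ℂ) • ψ t)
    (t : ℝ) :
    r' t ≥ -(∑ α, ‖h α‖ ^ 2) * r t := by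
  classical
  set P := ρ t with hP
  set v := ψ t with hv
  set w := ψ' t with hw
  set L := lindblad H h P with hL
  -- derivative of t ↦ matrix as CLM-valued path
  have hA : HasDerivAt (fun s => matCLMR n (ρ s)) (matCLMR n L) t :=
    (matCLMR n).hasFDerivAt.comp_hasDerivAt t (hρode t)
  have hAψ : HasDerivAt (fun s => matCLMR n (ρ s) (ψ s))
      (matCLMR n L v + matCLMR n P w) t := hA.clm_apply (hψ t)
  have hg : HasDerivAt (fun s => (inner ℂ (ψ s) (matCLMR n (ρ s) (ψ s)) : ℂ))
      ((inner ℂ v (matCLMR n L v + matCLMR n P w) : ℂ) + inner ℂ w (matCLMR n P v)) t :=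
    (hψ t).inner ℂ hAψ
  -- the inner product equals r
  have hgr : (fun s => (inner ℂ (ψ s) (matCLMR n (ρ s) (ψ s)) : ℂ)) = fun s => ((r s : ℂ)) := by
    funext s
    rw [matCLMR_apply, heig s, inner_smul_right, inner_self_eq_norm_sq_to_K, hψnorm s]
    norm_num
  have hr' : HasDerivAt (fun s => ((r s : ℂ))) ((r' t : ℂ)) t := (hr t).ofReal_comp
  have hkey : ((r' t : ℂ))
      = (inner ℂ v (matCLMR n L v + matCLMR n P w) : ℂ) + inner ℂ w (matCLMR n P v) := by
    rw [hgr] at hg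
    exact hr'.unique hg
  -- symmetric operator for P
  have hPsym := Matrix.isHermitian_iff_isSymmetric.mp (hρ t).1.1
  have hPv : Matrix.toEuclideanLin P v = (r t : ℂ) • v := heig t
  have hwv : (inner ℂ w v : ℂ) = 0 := by
    rw [← inner_conj_symm, hψorth t, map_zero]
  -- boundary terms vanish
  have hb1 : (inner ℂ w (matCLMR n P v) : ℂ) = 0 := by
    rw [matCLMR_apply, hPv, inner_smul_right, hwv, mul_zero]
  have hb2 : (inner ℂ v (matCLMR n P w) : ℂ) = 0 := by
    rw [matCLMR_apply, ← hPsym v w, hPv, inner_smul_left, hψorth t, mul_zero]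
  have hkey2 : ((r' t : ℂ)) = inner ℂ v (Matrix.toEuclideanLin L v) := by
    rw [hkey, inner_add_right, hb1, hb2, add_zero, add_zero, matCLMR_apply]
  -- Hamiltonian part vanishes
  have hHpart : (inner ℂ v (Matrix.toEuclideanLin (H * P - P * H) v) : ℂ) = 0 := by
    rw [map_sub, LinearMap.sub_apply, inner_sub_right, toEL_mul, toEL_mul, hPv, _root_.map_smul,
      inner_smul_right, ← hPsym, hPv, inner_smul_left, Complex.conj_ofReal]
    ring
  -- per-α terms
  have hterm : ∀ α, (inner ℂ v (Matrix.toEuclideanLin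
      (h α * P * (h α)ᴴ - (1/2 : ℂ) • ((h α)ᴴ * h α * P + P * ((h α)ᴴ * h α))) v) : ℂ)
      = inner ℂ (Matrix.toEuclideanLin (h α)ᴴ v)
          (Matrix.toEuclideanLin P (Matrix.toEuclideanLin (h α)ᴴ v))
        - (r t : ℂ) * ((‖Matrix.toEuclideanLin (h α) v‖ : ℂ)) ^ 2 := by
    intro α
    rw [map_sub, LinearMap.sub_apply, inner_sub_right, _root_.map_smul, LinearMap.smul_apply,
      inner_smul_right, map_add, LinearMap.add_apply, inner_add_right]
    have e1 : (inner ℂ v (Matrix.toEuclideanLin (h α * P * (h α)ᴴ) v) : ℂ)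
        = inner ℂ (Matrix.toEuclideanLin (h α)ᴴ v)
            (Matrix.toEuclideanLin P (Matrix.toEuclideanLin (h α)ᴴ v)) := by
      rw [toEL_mul, toEL_mul, ← inner_conjT_left (h α)]
    have e2 : (inner ℂ v (Matrix.toEuclideanLin ((h α)ᴴ * h α * P) v) : ℂ)
        = (r t : ℂ) * ((‖Matrix.toEuclideanLin (h α) v‖ : ℂ)) ^ 2 := by
      rw [toEL_mul, toEL_mul, hPv, _root_.map_smul, _root_.map_smul, inner_smul_right,
        inner_conjT_right, inner_self_eq_norm_sq_to_K]
      norm_num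
    have e3 : (inner ℂ v (Matrix.toEuclideanLin (P * ((h α)ᴴ * h α)) v) : ℂ)
        = (r t : ℂ) * ((‖Matrix.toEuclideanLin (h α) v‖ : ℂ)) ^ 2 := by
      rw [toEL_mul, ← hPsym, hPv, inner_smul_left, Complex.conj_ofReal, toEL_mul,
        inner_conjT_right, inner_self_eq_norm_sq_to_K]
      norm_num
    rw [e1, e2, e3]
    ring
  -- assemble
  have hsum : ((r' t : ℂ)) = ∑ α, (inner ℂ (Matrix.toEuclideanLin (h α)ᴴ v)
          (Matrix.toEuclideanLin P (Matrix.toEuclideanLin (h α)ᴴ v))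
        - (r t : ℂ) * ((‖Matrix.toEuclideanLin (h α) v‖ : ℂ)) ^ 2) := by
    rw [hkey2, hL, lindblad, map_add, LinearMap.add_apply, inner_add_right, _root_.map_smul,
      LinearMap.smul_apply, inner_smul_right, hHpart, mul_zero, zero_add, map_sum,
      LinearMap.sum_apply, inner_sum]
    exact Finset.sum_congr rfl fun α _ => hterm α
  -- take real parts
  have hre : r' t = ∑ α, ((inner ℂ (Matrix.toEuclideanLin (h α)ᴴ v)
          (Matrix.toEuclideanLin P (Matrix.toEuclideanLin (h α)ᴴ v)) : ℂ).re
        - r t * ‖Matrix.toEuclideanLin (h α) v‖ ^ 2) := by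
    have := congrArg Complex.re hsum
    simpa [← Complex.ofReal_pow, Complex.ofReal_re] using this
  -- bound each term
  have hbound : ∀ α, - (‖h α‖ ^ 2) * r t ≤ (inner ℂ (Matrix.toEuclideanLin (h α)ᴴ v)
          (Matrix.toEuclideanLin P (Matrix.toEuclideanLin (h α)ᴴ v)) : ℂ).re
        - r t * ‖Matrix.toEuclideanLin (h α) v‖ ^ 2 := by
    intro α
    have h1 := psd_inner_re_nonneg (hρ t).1 (Matrix.toEuclideanLin (h α)ᴴ v)
    have h2 : ‖Matrix.toEuclideanLin (h α) v‖ ≤ ‖h α‖ := by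
      have := (matCLM n (h α)).le_opNorm v
      rw [matCLM_norm, hψnorm t] at this
      simpa [matCLM_apply] using this
    have h3 : r t * ‖Matrix.toEuclideanLin (h α) v‖ ^ 2 ≤ ‖h α‖ ^ 2 * r t := by
      rw [mul_comm]
      exact mul_le_mul_of_nonneg_right
        (pow_le_pow_left₀ (norm_nonneg _) h2 2) (hrpos t)
    linarith
  have hS : -(∑ α, ‖h α‖ ^ 2) * r t = ∑ α, -(‖h α‖ ^ 2) * r t := by
    rw [neg_mul, Finset.sum_mul, ← Finset.sum_neg_distrib]
    simp [neg_mul]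
  rw [ge_iff_le, hS, hre]
  exact Finset.sum_le_sum fun α _ => hbound α
end

section
/- An orthogonal projector P is conserved by a Lindblad evolution (i.e. Tr[P ρ(t)] is constant in time for all initial density matrices ρ) if and only if P commutes with the Hamiltonian H and with every transition operator h_α. -/
open Matrix
open scoped Matrix.Norms.L2Operator ComplexOrder

/-- The Heisenberg-picture adjoint of the Lindblad generator, applied to `P`. -/
noncomputable def lindbladAdj {n : ℕ} {ι : Type*} [Fintype ι]
    (H : Matrix (Fin n) (Fin n) ℂ) (h : ι → Matrix (Fin n) (Fin n) ℂ)
    (P : Matrix (Fin n) (Fin n) ℂ) : Matrix (Fin n) (Fin n) ℂ :=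
  -Complex.I • (P * H - H * P) +
    ∑ α, ((h α)ᴴ * P * h α - (1/2 : ℂ) • ((h α)ᴴ * h α * P + P * ((h α)ᴴ * h α)))

/-- The continuous linear functional `X ↦ (P * X).trace`. -/
noncomputable def LP {n : ℕ} (P : Matrix (Fin n) (Fin n) ℂ) :
    Matrix (Fin n) (Fin n) ℂ →L[ℝ] ℂ :=
  LinearMap.toContinuousLinearMap
    (((Matrix.traceLinearMap (Fin n) ℂ ℂ).comp (LinearMap.mulLeft ℂ P)).restrictScalars ℝ)

lemma quad_zero {n : ℕ} {M : Matrix (Fin n) (Fin n) ℂ}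
    (hv : ∀ v : Fin n → ℂ, star v ⬝ᵥ M *ᵥ v = 0) : M = 0 := by
  have h1 : ∀ x : EuclideanSpace ℂ (Fin n), (inner ℂ ((Matrix.toEuclideanLin Mᴴ) x) x : ℂ) = 0 := by
    intro x
    rw [EuclideanSpace.inner_eq_star_dotProduct, Matrix.ofLp_toEuclideanLin_apply,
      star_mulVec, conjTranspose_conjTranspose, dotProduct_comm, ← dotProduct_mulVec]
    exact hv _
  have h2 := (inner_map_self_eq_zero (Matrix.toEuclideanLin Mᴴ)).mp h1
  have h3 : Mᴴ = 0 := (LinearEquiv.map_eq_zero_iff _).mp h2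
  simpa using congrArg conjTranspose h3

lemma sum_sq_zero {n : ℕ} {ι : Type*} [Fintype ι] {A : ι → Matrix (Fin n) (Fin n) ℂ}
    (hs : ∑ α, (A α)ᴴ * A α = 0) (α : ι) : A α = 0 := by
  have hx : ∀ x : Fin n → ℂ, A α *ᵥ x = 0 := by
    intro x
    have hsmv : (∑ β, (A β)ᴴ * A β) *ᵥ x = ∑ β, ((A β)ᴴ * A β) *ᵥ x := by
      ext i
      simp only [Matrix.mulVec, dotProduct, Finset.sum_apply, Matrix.sum_apply,
        Finset.sum_mul]
      rw [Finset.sum_comm]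
    have h0 : ∑ β, star (A β *ᵥ x) ⬝ᵥ (A β *ᵥ x) = 0 := by
      have h1 : star x ⬝ᵥ ((∑ β, (A β)ᴴ * A β) *ᵥ x) = 0 := by rw [hs]; simp
      rw [hsmv] at h1
      have h1' : ∑ β, star x ⬝ᵥ (((A β)ᴴ * A β) *ᵥ x) = 0 := by
        rw [← h1]
        simp only [dotProduct, Finset.sum_apply, Finset.mul_sum]
        exact Finset.sum_comm
      rw [← h1']
      refine Finset.sum_congr rfl fun β _ => ?_
      calc star (A β *ᵥ x) ⬝ᵥ (A β *ᵥ x)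
          = (star x ᵥ* (A β)ᴴ) ⬝ᵥ (A β *ᵥ x) := by rw [star_mulVec]
        _ = ((star x ᵥ* (A β)ᴴ) ᵥ* (A β)) ⬝ᵥ x := dotProduct_mulVec _ _ _
        _ = (star x ᵥ* ((A β)ᴴ * A β)) ⬝ᵥ x := by rw [vecMul_vecMul]
        _ = star x ⬝ᵥ (((A β)ᴴ * A β) *ᵥ x) := (dotProduct_mulVec _ _ _).symm
    have h2 := (Finset.sum_eq_zero_iff_of_nonneg
      (fun β _ => dotProduct_star_self_nonneg (A β *ᵥ x))).mp h0
    exact dotProduct_star_self_eq_zero.mp (h2 α (Finset.mem_univ α))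
  ext i j
  have := congr_fun (hx (Pi.single j 1)) i
  simpa [Matrix.mulVec_single] using this

lemma tracePL {n : ℕ} {ι : Type*} [Fintype ι]
    (H : Matrix (Fin n) (Fin n) ℂ) (h : ι → Matrix (Fin n) (Fin n) ℂ)
    (P ρ : Matrix (Fin n) (Fin n) ℂ) :
    (P * lindblad H h ρ).trace = (lindbladAdj H h P * ρ).trace := by
  have t1 : (P * (-Complex.I • (H * ρ - ρ * H))).trace
      = ((-Complex.I • (P * H - H * P)) * ρ).trace := by
    rw [Matrix.mul_smul, Matrix.smul_mul, trace_smul, trace_smul, Matrix.mul_sub,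
      Matrix.sub_mul, trace_sub, trace_sub]
    congr 1
    congr 1
    · rw [mul_assoc]
    · rw [← mul_assoc, trace_mul_cycle]
  have t2 : ∀ α, (P * (h α * ρ * (h α)ᴴ -
        (1/2 : ℂ) • ((h α)ᴴ * h α * ρ + ρ * ((h α)ᴴ * h α)))).trace
      = (((h α)ᴴ * P * h α -
        (1/2 : ℂ) • ((h α)ᴴ * h α * P + P * ((h α)ᴴ * h α))) * ρ).trace := by
    intro α
    rw [Matrix.mul_sub, Matrix.sub_mul, trace_sub, trace_sub]
    congr 1
    · rw [show P * (h α * ρ * (h α)ᴴ) = P * (h α * ρ) * (h α)ᴴ by simp only [mul_assoc],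
        trace_mul_comm]
      simp only [mul_assoc]
    · rw [Matrix.mul_smul, Matrix.smul_mul, trace_smul, trace_smul, Matrix.mul_add,
        Matrix.add_mul, trace_add, trace_add]
      congr 1
      rw [add_comm]
      congr 1
      · rw [← mul_assoc, trace_mul_comm, ← mul_assoc]
      · rw [← mul_assoc, ← mul_assoc]
  rw [lindblad, lindbladAdj, Matrix.mul_add, Matrix.add_mul, trace_add, trace_add,
    Finset.mul_sum, Finset.sum_mul, trace_sum, trace_sum, t1]
  exact congrArg _ (Finset.sum_congr rfl fun α _ => t2 α)

section algebra
variable {n : ℕ} {ι : Type*} [Fintype ι]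
  (H : Matrix (Fin n) (Fin n) ℂ) (h : ι → Matrix (Fin n) (Fin n) ℂ)
  (P : Matrix (Fin n) (Fin n) ℂ)

lemma sumpart_zero (hPh : Pᴴ = P) (hcomm : ∀ α, h α * P = P * h α) :
    ∑ α, ((h α)ᴴ * P * h α - (1/2 : ℂ) • ((h α)ᴴ * h α * P + P * ((h α)ᴴ * h α))) = 0 := by
  refine Finset.sum_eq_zero fun α _ => ?_
  have hstar : (h α)ᴴ * P = P * (h α)ᴴ := by
    have := congrArg conjTranspose (hcomm α)
    simpa [conjTranspose_mul, hPh] using this.symm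
  have e1 : (h α)ᴴ * P * h α = (h α)ᴴ * h α * P := by
    rw [mul_assoc, ← hcomm α, ← mul_assoc]
  have e2 : P * ((h α)ᴴ * h α) = (h α)ᴴ * h α * P := by
    rw [← mul_assoc, ← hstar, mul_assoc, ← hcomm α, ← mul_assoc]
  rw [e1, e2, ← two_smul ℂ, smul_smul]
  norm_num

lemma adj_zero (hPh : Pᴴ = P) (hHP : H * P = P * H) (hcomm : ∀ α, h α * P = P * h α) :
    lindbladAdj H h P = 0 := by
  rw [lindbladAdj, sumpart_zero h P hPh hcomm, hHP.symm, sub_self, smul_zero, add_zero]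

lemma sandwichP (hP : P * P = P) (hPh : Pᴴ = P) :
    P * lindbladAdj H h P * P
      = -∑ α, (((1 - P) * h α * P)ᴴ * ((1 - P) * h α * P)) := by
  have hP' : ∀ X : Matrix (Fin n) (Fin n) ℂ, P * (P * X) = P * X := fun X => by
    rw [← mul_assoc, hP]
  simp only [lindbladAdj, Matrix.add_mul, Matrix.mul_add, Matrix.sub_mul, Matrix.mul_sub,
    Matrix.smul_mul, Matrix.mul_smul, Finset.mul_sum, Finset.sum_mul, conjTranspose_mul,
    conjTranspose_sub, conjTranspose_one, hPh, Matrix.one_mul, Matrix.mul_one,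
    ← Finset.sum_neg_distrib, neg_sub, smul_add, smul_sub, mul_assoc, hP', hP]
  rw [sub_self, zero_add]
  refine Finset.sum_congr rfl fun α _ => ?_
  module

lemma sandwichQ (hP : P * P = P) (hPh : Pᴴ = P) :
    (1 - P) * lindbladAdj H h P * (1 - P)
      = ∑ α, ((P * h α * (1 - P))ᴴ * (P * h α * (1 - P))) := by
  have hP' : ∀ X : Matrix (Fin n) (Fin n) ℂ, P * (P * X) = P * X := fun X => by
    rw [← mul_assoc, hP]
  have key0 : (1 - P) * (P * H - H * P) * (1 - P) = 0 := by
    simp only [Matrix.mul_sub, Matrix.sub_mul, Matrix.one_mul, Matrix.mul_one, mul_assoc,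
      hP', hP]
    module
  have key1 : (1 - P) * (-Complex.I • (P * H - H * P)) * (1 - P) = 0 := by
    rw [Matrix.mul_smul, Matrix.smul_mul, key0, smul_zero]
  rw [lindbladAdj, Matrix.mul_add, Matrix.add_mul, key1, zero_add, Finset.mul_sum,
    Finset.sum_mul]
  refine Finset.sum_congr rfl fun α _ => ?_
  simp only [Matrix.mul_sub, Matrix.sub_mul, Matrix.mul_add, Matrix.add_mul,
    Matrix.mul_smul, Matrix.smul_mul, conjTranspose_mul, conjTranspose_sub, conjTranspose_one,
    hPh, Matrix.one_mul, Matrix.mul_one, mul_assoc, hP', hP]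
  module

end algebra

lemma psd_outer {n : ℕ} (v : Fin n → ℂ) : (vecMulVec v (star v)).PosSemidef := by
  rw [vecMulVec_eq (Fin 1), ← conjTranspose_replicateCol]
  exact posSemidef_self_mul_conjTranspose _

lemma trace_outer {n : ℕ} (v : Fin n → ℂ) : (vecMulVec v (star v)).trace = star v ⬝ᵥ v := by
  simp only [Matrix.trace, Matrix.diag, Matrix.vecMulVec_apply, dotProduct,
    Pi.star_apply]
  exact Finset.sum_congr rfl fun i _ => mul_comm _ _

lemma trace_mul_outer {n : ℕ} (M : Matrix (Fin n) (Fin n) ℂ) (v w : Fin n → ℂ) :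
    (M * vecMulVec v w).trace = w ⬝ᵥ (M *ᵥ v) := by
  simp only [Matrix.trace, Matrix.diag, Matrix.mul_apply, Matrix.vecMulVec_apply,
    dotProduct, Matrix.mulVec, Finset.mul_sum]
  exact Finset.sum_congr rfl fun i _ => Finset.sum_congr rfl fun j _ => by ring

lemma psd_smul {n : ℕ} {M : Matrix (Fin n) (Fin n) ℂ} (hM : M.PosSemidef)
    (r : ℝ) (hr : 0 ≤ r) : ((r : ℂ) • M).PosSemidef := by
  constructor
  · show ((r : ℂ) • M)ᴴ = (r : ℂ) • M
    rw [conjTranspose_smul, hM.1]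
    simp
  · intro x
    exact (hM.smul (Complex.zero_le_real.mpr hr)).2 x

/-- An orthogonal projector `P` is conserved by the Lindblad evolution `T` iff it
commutes with the Hamiltonian and with every transition operator. -/
theorem stmt3 {n : ℕ} {ι : Type*} [Fintype ι]
    (H : Matrix (Fin n) (Fin n) ℂ) (hH : H.IsHermitian)
    (h : ι → Matrix (Fin n) (Fin n) ℂ)
    (T : ℝ → Matrix (Fin n) (Fin n) ℂ →ₗ[ℂ] Matrix (Fin n) (Fin n) ℂ)
    (hT0 : T 0 = LinearMap.id)
    (hTderiv : ∀ (ρ : Matrix (Fin n) (Fin n) ℂ) (t : ℝ),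
      HasDerivAt (fun s => T s ρ) (lindblad H h (T t ρ)) t)
    (P : Matrix (Fin n) (Fin n) ℂ) (hP : P * P = P) (hPh : Pᴴ = P) :
    (∀ ρ : Matrix (Fin n) (Fin n) ℂ, ρ.PosSemidef → ρ.trace = 1 →
        ∀ t ≥ (0:ℝ), (P * T t ρ).trace = (P * ρ).trace) ↔
      (H * P = P * H ∧ ∀ α, h α * P = P * h α) := by
  constructor
  · intro hcons
    -- Step 1: the adjoint generator annihilates P.
    have hM : lindbladAdj H h P = 0 := by
      apply quad_zero
      intro v
      by_cases hv : v = 0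
      · simp [hv]
      · set c : ℂ := star v ⬝ᵥ v with hc
        have hc0 : 0 ≤ c := dotProduct_star_self_nonneg v
        have hcne : c ≠ 0 := fun hh => hv (dotProduct_star_self_eq_zero.mp hh)
        have him : c.im = 0 := ((Complex.le_def.mp hc0).2).symm
        obtain ⟨r, hr⟩ : ∃ r : ℝ, c = (r : ℂ) :=
          ⟨c.re, (Complex.ext (by simp) (by simp [him])).symm⟩
        have hrre : 0 ≤ r := by
          rw [hr] at hc0
          exact Complex.zero_le_real.mp hc0
        have hrne : r ≠ 0 := fun hh => hcne (by rw [hr, hh, Complex.ofReal_zero])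
        set ρ : Matrix (Fin n) (Fin n) ℂ := ((r⁻¹ : ℝ) : ℂ) • vecMulVec v (star v) with hρ
        have hpsd : ρ.PosSemidef := psd_smul (psd_outer v) _ (inv_nonneg.mpr hrre)
        have htr : ρ.trace = 1 := by
          rw [hρ, trace_smul, trace_outer, ← hc, hr, smul_eq_mul, ← Complex.ofReal_mul,
            inv_mul_cancel₀ hrne, Complex.ofReal_one]
        have hcons' := hcons ρ hpsd htr
        -- derivative of the constant function at 0 within [0, ∞)
        have hd1 : HasDerivWithinAt (fun s => LP P (T s ρ)) (LP P (lindblad H h ρ))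
            (Set.Ici 0) 0 := by
          have hder := ((LP P).hasFDerivAt).comp_hasDerivAt 0 (hTderiv ρ 0)
          rw [hT0] at hder
          exact hder.hasDerivWithinAt
        have hd2 : HasDerivWithinAt (fun s => LP P (T s ρ)) 0 (Set.Ici 0) 0 := by
          have heq : ∀ s ∈ Set.Ici (0:ℝ), (fun s => LP P (T s ρ)) s = (P * ρ).trace :=
            fun s hs => hcons' s hs
          exact (hasDerivWithinAt_const 0 _ ((P * ρ).trace)).congr heq
            (heq 0 Set.self_mem_Ici)
        have hu : UniqueDiffWithinAt ℝ (Set.Ici (0:ℝ)) 0 :=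
          uniqueDiffOn_Ici 0 0 Set.self_mem_Ici
        have hzero : LP P (lindblad H h ρ) = 0 := hu.eq_deriv _ hd1 hd2
        have hder0 : (P * lindblad H h ρ).trace = 0 := hzero
        have htrM : (lindbladAdj H h P * ρ).trace = 0 := by rw [← tracePL]; exact hder0
        rw [hρ, Matrix.mul_smul, trace_smul, trace_mul_outer, smul_eq_mul] at htrM
        have hinv : ((r⁻¹ : ℝ) : ℂ) ≠ 0 := by
          simpa using inv_ne_zero hrne
        exact (mul_eq_zero.mp htrM).resolve_left hinv
    -- Step 2: extract commutation with the jump operators.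
    have hQhP : ∀ α, (1 - P) * h α * P = 0 := by
      have hsum : ∑ α, (((1 - P) * h α * P)ᴴ * ((1 - P) * h α * P)) = 0 := by
        have hs := sandwichP H h P hP hPh
        rw [hM, Matrix.mul_zero, Matrix.zero_mul] at hs
        exact neg_eq_zero.mp hs.symm
      exact fun α => sum_sq_zero hsum α
    have hPhQ : ∀ α, P * h α * (1 - P) = 0 := by
      have hsum : ∑ α, ((P * h α * (1 - P))ᴴ * (P * h α * (1 - P))) = 0 := by
        have hs := sandwichQ H h P hP hPh
        rw [hM, Matrix.mul_zero, Matrix.zero_mul] at hs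
        exact hs.symm
      exact fun α => sum_sq_zero hsum α
    have hcomm : ∀ α, h α * P = P * h α := by
      intro α
      have a1 : h α * P = P * h α * P := by
        calc h α * P = (P + (1 - P)) * h α * P := by rw [add_sub_cancel, Matrix.one_mul]
          _ = P * h α * P + (1 - P) * h α * P := by
              rw [Matrix.add_mul, Matrix.add_mul]
          _ = P * h α * P := by rw [hQhP α, add_zero]
      have a2 : P * h α = P * h α * P := by
        calc P * h α = P * h α * (P + (1 - P)) := by rw [add_sub_cancel, Matrix.mul_one]
          _ = P * h α * P + P * h α * (1 - P) := by rw [Matrix.mul_add]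
          _ = P * h α * P := by rw [hPhQ α, add_zero]
      rw [a1, ← a2]
    refine ⟨?_, hcomm⟩
    -- Step 3: extract commutation with the Hamiltonian.
    have hM' := hM
    rw [lindbladAdj, sumpart_zero h P hPh hcomm, add_zero] at hM'
    have h2 : P * H - H * P = 0 := by
      rcases smul_eq_zero.mp hM' with h3 | h3
      · exact absurd (neg_eq_zero.mp h3) Complex.I_ne_zero
      · exact h3
    rw [sub_eq_zero] at h2
    exact h2.symm
  · rintro ⟨hHP, hcomm⟩ ρ hρpsd hρtr t ht
    have hM : lindbladAdj H h P = 0 := adj_zero H h P hPh hHP hcomm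
    have hg : ∀ s : ℝ, HasDerivAt (fun u => LP P (T u ρ))
        (LP P (lindblad H h (T s ρ))) s :=
      fun s => ((LP P).hasFDerivAt).comp_hasDerivAt s (hTderiv ρ s)
    have hzero : ∀ s : ℝ, LP P (lindblad H h (T s ρ)) = 0 := by
      intro s
      show (P * lindblad H h (T s ρ)).trace = 0
      rw [tracePL, hM, Matrix.zero_mul, trace_zero]
    have hdiff : Differentiable ℝ (fun u => LP P (T u ρ)) :=
      fun s => (hg s).differentiableAt
    have hfder : ∀ s : ℝ, fderiv ℝ (fun u => LP P (T u ρ)) s = 0 := by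
      intro s
      have hds := hg s
      rw [hzero s] at hds
      have hfd : HasFDerivAt (fun u => LP P (T u ρ))
          ((1 : ℝ →L[ℝ] ℝ).smulRight (0 : ℂ)) s := hasDerivAt_iff_hasFDerivAt.mp hds
      rw [hfd.fderiv]
      ext
      simp
    have hconst := is_const_of_fderiv_eq_zero hdiff hfder t 0
    have : (P * T t ρ).trace = (P * T 0 ρ).trace := hconst
    rw [hT0] at this
    exact this
end

section
/- A subspace PH is lazy (no first-order flow out of it: for all ρ = PρP, d/dt Tr[P ρ(t) P] = 0 at t = 0) if and only if h_α P = P h_α P for every transition operator h_α. -/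
open Matrix
open scoped Matrix.Norms.L2Operator ComplexOrder

namespace LazyAux

variable {n : ℕ} {ι : Type*} [Fintype ι]

/-- `A ↦ trace (P * A * P)` as a linear map. -/
noncomputable def trP (P : Matrix (Fin n) (Fin n) ℂ) :
    Matrix (Fin n) (Fin n) ℂ →ₗ[ℂ] ℂ where
  toFun A := (P * A * P).trace
  map_add' A B := by simp [Matrix.mul_add, Matrix.add_mul]
  map_smul' c A := by simp [Matrix.mul_smul, Matrix.smul_mul]

lemma hasDeriv_tr (P : Matrix (Fin n) (Fin n) ℂ)
    (H : Matrix (Fin n) (Fin n) ℂ) (h : ι → Matrix (Fin n) (Fin n) ℂ)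
    (T : ℝ → Matrix (Fin n) (Fin n) ℂ →ₗ[ℂ] Matrix (Fin n) (Fin n) ℂ)
    (hT0 : T 0 = LinearMap.id)
    (hTderiv : ∀ (ρ : Matrix (Fin n) (Fin n) ℂ) (t : ℝ),
      HasDerivAt (fun s => T s ρ) (lindblad H h (T t ρ)) t)
    (ρ : Matrix (Fin n) (Fin n) ℂ) :
    HasDerivAt (fun t => (P * T t ρ * P).trace)
      ((P * lindblad H h ρ * P).trace) 0 := by
  have hd := hTderiv ρ 0
  rw [show T 0 ρ = ρ by rw [hT0]; rfl] at hd
  have hL := (((LinearMap.toContinuousLinearMap (trP P)).restrictScalars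
      ℝ).hasFDerivAt (x := (T 0) ρ)).comp_hasDerivAt (x := 0) hd
  exact hL

lemma trace_key (P : Matrix (Fin n) (Fin n) ℂ) (hP : P * P = P) (hPh : Pᴴ = P)
    (H : Matrix (Fin n) (Fin n) ℂ) (h : ι → Matrix (Fin n) (Fin n) ℂ)
    (ρ : Matrix (Fin n) (Fin n) ℂ) (h1 : P * ρ = ρ) (h2 : ρ * P = ρ) :
    (P * lindblad H h ρ * P).trace
      = - ∑ α, (((1 - P) * h α * P) * ρ * ((1 - P) * h α * P)ᴴ).trace := by
  have tr3 : ∀ X : Matrix (Fin n) (Fin n) ℂ, (P * X * P).trace = (X * P).trace := by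
    intro X
    rw [Matrix.trace_mul_cycle, hP, Matrix.trace_mul_comm]
  have eH : (P * (H * ρ) * P).trace = (H * ρ).trace := by
    rw [tr3, Matrix.mul_assoc, h2]
  have eH' : (P * (ρ * H) * P).trace = (H * ρ).trace := by
    rw [tr3, Matrix.trace_mul_cycle, h1, Matrix.trace_mul_comm]
  have eα : ∀ α, (((1 - P) * h α * P) * ρ * ((1 - P) * h α * P)ᴴ).trace
      = ((h α)ᴴ * h α * ρ).trace - (P * (h α * ρ * (h α)ᴴ) * P).trace := by
    intro α
    have hBH : ((1 - P) * h α * P)ᴴ = P * ((h α)ᴴ * (1 - P)) := by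
      simp [Matrix.conjTranspose_mul, Matrix.conjTranspose_sub, hPh, Matrix.mul_assoc]
    have hB : ((1 - P) * h α * P) * ρ * (((1 - P) * h α * P)ᴴ)
        = (1 - P) * (h α * ρ * (h α)ᴴ) * (1 - P) := by
      rw [hBH]
      have : (1 - P) * h α * P * ρ = (1 - P) * h α * ρ := by
        rw [Matrix.mul_assoc, h1]
      rw [this]
      have : (1 - P) * h α * ρ * (P * ((h α)ᴴ * (1 - P)))
          = ((1 - P) * h α * ρ * P) * ((h α)ᴴ * (1 - P)) := by
        rw [Matrix.mul_assoc ((1 - P) * h α * ρ) P, ← Matrix.mul_assoc]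
      rw [this, Matrix.mul_assoc ((1 - P) * h α) ρ P, h2]
      noncomm_ring
    rw [hB]
    set X := h α * ρ * (h α)ᴴ with hX
    have expand : (1 - P) * X * (1 - P) = X - P * X - X * P + P * X * P := by
      noncomm_ring
    rw [expand, Matrix.trace_add, Matrix.trace_sub, Matrix.trace_sub, tr3,
        Matrix.trace_mul_comm P X]
    have : X.trace = ((h α)ᴴ * h α * ρ).trace := by
      rw [hX, Matrix.trace_mul_cycle]
    rw [this]
    ring
  have eα2 : ∀ α, (P * ((h α)ᴴ * h α * ρ) * P).trace = ((h α)ᴴ * h α * ρ).trace := by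
    intro α
    rw [tr3, Matrix.mul_assoc, h2]
  have eα3 : ∀ α, (P * (ρ * ((h α)ᴴ * h α)) * P).trace = ((h α)ᴴ * h α * ρ).trace := by
    intro α
    rw [tr3, Matrix.trace_mul_cycle, h1, Matrix.trace_mul_comm]
  have hRHS : ∑ α, (((1 - P) * h α * P) * ρ * ((1 - P) * h α * P)ᴴ).trace
      = ∑ α, ((h α)ᴴ * h α * ρ).trace - ∑ α, (P * (h α * ρ * (h α)ᴴ) * P).trace := by
    simp only [eα]
    rw [Finset.sum_sub_distrib]
  have ecoh : (P * (-Complex.I • (H * ρ - ρ * H)) * P).trace = 0 := by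
    rw [Matrix.mul_smul, Matrix.smul_mul, Matrix.trace_smul, Matrix.mul_sub,
      Matrix.sub_mul, Matrix.trace_sub, eH, eH', sub_self, smul_zero]
  have eδ : ∀ α, (P * (h α * ρ * (h α)ᴴ
        - (1/2 : ℂ) • ((h α)ᴴ * h α * ρ + ρ * ((h α)ᴴ * h α))) * P).trace
      = (P * (h α * ρ * (h α)ᴴ) * P).trace - ((h α)ᴴ * h α * ρ).trace := by
    intro α
    rw [Matrix.mul_sub, Matrix.sub_mul, Matrix.trace_sub, Matrix.mul_smul,
      Matrix.smul_mul, Matrix.trace_smul, Matrix.mul_add, Matrix.add_mul,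
      Matrix.trace_add, eα2, eα3, smul_eq_mul]
    ring
  unfold lindblad
  rw [Matrix.mul_add, Matrix.add_mul, Matrix.trace_add, Finset.mul_sum,
    Finset.sum_mul, Matrix.trace_sum, ecoh, zero_add]
  simp only [eδ]
  rw [Finset.sum_sub_distrib, hRHS]
  ring

lemma outer_psd (v : Fin n → ℂ) : (vecMulVec v (star v)).PosSemidef := by
  rw [Matrix.posSemidef_iff_dotProduct_mulVec]
  constructor
  · ext i j
    simp [Matrix.conjTranspose_apply, Matrix.vecMulVec_apply, mul_comm]
  · intro x
    have : star x ⬝ᵥ (vecMulVec v (star v) *ᵥ x)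
        = (star x ⬝ᵥ v) * star (star x ⬝ᵥ v) := by
      simp only [dotProduct, Matrix.mulVec, Matrix.vecMulVec_apply,
        Pi.star_apply, star_sum, star_mul', star_star, Finset.mul_sum,
        Finset.sum_mul]
      rw [Finset.sum_comm]
      apply Finset.sum_congr rfl
      intro i _
      apply Finset.sum_congr rfl
      intro j _
      ring
    rw [this]
    exact mul_star_self_nonneg _

lemma outer_trace (v : Fin n → ℂ) :
    (vecMulVec v (star v)).trace = ((∑ i, Complex.normSq (v i) : ℝ) : ℂ) := by
  simp [Matrix.trace, Matrix.diag, Matrix.vecMulVec_apply, Complex.mul_conj]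

lemma mul_vecMulVec (A : Matrix (Fin n) (Fin n) ℂ) (v w : Fin n → ℂ) :
    A * vecMulVec v w = vecMulVec (A *ᵥ v) w := by
  ext i j
  simp only [Matrix.mul_apply, Matrix.vecMulVec_apply, Matrix.mulVec,
    dotProduct, Finset.sum_mul]
  apply Finset.sum_congr rfl
  intro k _
  ring

lemma vecMulVec_mul (A : Matrix (Fin n) (Fin n) ℂ) (v w : Fin n → ℂ) :
    vecMulVec v w * A = vecMulVec v (w ᵥ* A) := by
  ext i j
  simp only [Matrix.mul_apply, Matrix.vecMulVec_apply, Matrix.vecMul,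
    dotProduct, Finset.mul_sum]
  apply Finset.sum_congr rfl
  intro k _
  ring

end LazyAux

open LazyAux in
/-- `P ℋ` is a lazy subspace (no first-order flow out) iff `h_α P = P h_α P` for all `α`. -/
theorem stmt4 {n : ℕ} {ι : Type*} [Fintype ι]
    (H : Matrix (Fin n) (Fin n) ℂ) (hH : H.IsHermitian)
    (h : ι → Matrix (Fin n) (Fin n) ℂ)
    (T : ℝ → Matrix (Fin n) (Fin n) ℂ →ₗ[ℂ] Matrix (Fin n) (Fin n) ℂ)
    (hT0 : T 0 = LinearMap.id)
    (hTderiv : ∀ (ρ : Matrix (Fin n) (Fin n) ℂ) (t : ℝ),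
      HasDerivAt (fun s => T s ρ) (lindblad H h (T t ρ)) t)
    (P : Matrix (Fin n) (Fin n) ℂ) (hP : P * P = P) (hPh : Pᴴ = P) :
    (∀ ρ : Matrix (Fin n) (Fin n) ℂ, ρ.PosSemidef → ρ.trace = 1 → ρ = P * ρ * P →
        HasDerivAt (fun t => (P * T t ρ * P).trace) (0 : ℂ) 0) ↔
      ∀ α, h α * P = P * (h α * P) := by
  constructor
  · intro hyp α
    -- the key consequence for density matrices supported in `P`
    have key : ∀ ρ : Matrix (Fin n) (Fin n) ℂ, ρ.PosSemidef → ρ.trace = 1 →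
        ρ = P * ρ * P →
        ∑ β, (((1 - P) * h β * P) * ρ * ((1 - P) * h β * P)ᴴ).trace = 0 := by
      intro ρ hpsd htr hρ
      have h1 : P * ρ = ρ := by
        conv_lhs => rw [hρ]
        conv_rhs => rw [hρ]
        simp only [← Matrix.mul_assoc, hP]
      have h2 : ρ * P = ρ := by
        conv_lhs => rw [hρ]
        conv_rhs => rw [hρ]
        simp only [Matrix.mul_assoc, hP]
      have hu := (hasDeriv_tr P H h T hT0 hTderiv ρ).unique (hyp ρ hpsd htr hρ)
      rw [trace_key P hP hPh H h ρ h1 h2] at hu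
      exact neg_eq_zero.mp hu
    -- it follows that `(1-P) h_α P` kills every vector
    have hvec : ∀ w : Fin n → ℂ, ((1 - P) * h α * P) *ᵥ w = 0 := by
      intro w
      have hfactor : ((1 - P) * h α * P) *ᵥ w = ((1 - P) * h α) *ᵥ (P *ᵥ w) := by
        rw [Matrix.mulVec_mulVec]
      by_cases hw : P *ᵥ w = 0
      · rw [hfactor, hw, Matrix.mulVec_zero]
      · set u : Fin n → ℂ := P *ᵥ w with hu
        set s : ℝ := ∑ i, Complex.normSq (u i) with hs
        have hspos : 0 < s := by
          rcases Function.ne_iff.mp hw with ⟨i, hi⟩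
          have : 0 < Complex.normSq (u i) := by
            simpa [Complex.normSq_pos] using hi
          exact lt_of_lt_of_le this (Finset.single_le_sum
            (fun j _ => Complex.normSq_nonneg (u j)) (Finset.mem_univ i))
        set c : ℂ := ((Real.sqrt s : ℝ) : ℂ)⁻¹ with hc
        have hcne : c ≠ 0 := by
          simp [hc, Complex.ofReal_ne_zero, Real.sqrt_ne_zero', hspos]
        set v : Fin n → ℂ := c • u with hv
        have hPu : P *ᵥ u = u := by
          rw [hu, Matrix.mulVec_mulVec, hP]
        have hPv : P *ᵥ v = v := by
          rw [hv, Matrix.mulVec_smul, hPu]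
        set ρ : Matrix (Fin n) (Fin n) ℂ := vecMulVec v (star v) with hρdef
        have hρP : ρ = P * ρ * P := by
          rw [hρdef, LazyAux.mul_vecMulVec, hPv, LazyAux.vecMulVec_mul]
          have hsv : star v ᵥ* P = star v := by
            conv_lhs => rw [← hPh]
            rw [Matrix.vecMul_conjTranspose, star_star, hPv]
          rw [hsv]
        have htrρ : ρ.trace = 1 := by
          rw [hρdef, outer_trace]
          have hnc : Complex.normSq c = s⁻¹ := by
            rw [hc, map_inv₀, Complex.normSq_ofReal, Real.mul_self_sqrt hspos.le]
          have hterm : ∀ i, Complex.normSq (v i) = s⁻¹ * Complex.normSq (u i) := by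
            intro i
            rw [hv]
            simp only [Pi.smul_apply, smul_eq_mul, Complex.normSq_mul, hnc]
          have hv1 : ∑ i, Complex.normSq (v i) = 1 := by
            simp only [hterm]
            rw [← Finset.mul_sum, ← hs, inv_mul_cancel₀ hspos.ne']
          rw [hv1]
          simp
        have hkey := key ρ (hρdef ▸ outer_psd v) htrρ hρP
        -- each summand is a nonnegative real; conclude the `α` term vanishes
        have hterm : ∀ β, (((1 - P) * h β * P) * ρ * ((1 - P) * h β * P)ᴴ).trace
            = ((∑ i, Complex.normSq ((((1 - P) * h β * P) *ᵥ v) i) : ℝ) : ℂ) := by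
          intro β
          set B := (1 - P) * h β * P with hB
          have : B * ρ * Bᴴ = vecMulVec (B *ᵥ v) (star (B *ᵥ v)) := by
            rw [hρdef, LazyAux.mul_vecMulVec, LazyAux.vecMulVec_mul, Matrix.vecMul_conjTranspose,
              star_star]
          rw [this, outer_trace]
        have hsum0 : ∑ β, (∑ i, Complex.normSq ((((1 - P) * h β * P) *ᵥ v) i)) = 0 := by
          have := hkey
          simp only [hterm] at this
          exact_mod_cast (by exact_mod_cast this : ((∑ β, ∑ i,
            Complex.normSq ((((1 - P) * h β * P) *ᵥ v) i) : ℝ) : ℂ) = 0)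
        have hαzero : ∑ i, Complex.normSq ((((1 - P) * h α * P) *ᵥ v) i) = 0 := by
          have hnn : ∀ β ∈ Finset.univ, (0:ℝ) ≤ ∑ i,
              Complex.normSq ((((1 - P) * h β * P) *ᵥ v) i) :=
            fun β _ => Finset.sum_nonneg fun i _ => Complex.normSq_nonneg _
          exact (Finset.sum_eq_zero_iff_of_nonneg hnn).mp hsum0 α (Finset.mem_univ α)
        have hBv : ((1 - P) * h α * P) *ᵥ v = 0 := by
          funext i
          have := (Finset.sum_eq_zero_iff_of_nonneg
            (fun i _ => Complex.normSq_nonneg ((((1 - P) * h α * P) *ᵥ v) i))).mp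
            hαzero i (Finset.mem_univ i)
          exact Complex.normSq_eq_zero.mp this
        -- unscale
        have hBu : ((1 - P) * h α * P) *ᵥ u = 0 := by
          have : ((1 - P) * h α * P) *ᵥ v = c • (((1 - P) * h α * P) *ᵥ u) := by
            rw [hv, Matrix.mulVec_smul]
          rw [this] at hBv
          rcases smul_eq_zero.mp hBv with hc0 | h0
          · exact absurd hc0 hcne
          · exact h0
        rw [← Matrix.mulVec_mulVec, hPu] at hBu
        rw [hfactor]
        exact hBu
    have hB0 : (1 - P) * h α * P = 0 := by
      ext i j
      have := hvec (Pi.single j 1)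
      have h2 := congrFun this i
      simpa [Matrix.mulVec_single] using h2
    have : h α * P - P * (h α * P) = 0 := by
      have expand : (1 - P) * h α * P = h α * P - P * (h α * P) := by
        noncomm_ring
      rw [← expand]; exact hB0
    exact sub_eq_zero.mp this
  · intro hc ρ hpsd htr hρ
    have h1 : P * ρ = ρ := by
      conv_lhs => rw [hρ]
      conv_rhs => rw [hρ]
      simp only [← Matrix.mul_assoc, hP]
    have h2 : ρ * P = ρ := by
      conv_lhs => rw [hρ]
      conv_rhs => rw [hρ]
      simp only [Matrix.mul_assoc, hP]
    have hz : (P * lindblad H h ρ * P).trace = 0 := by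
      rw [trace_key P hP hPh H h ρ h1 h2]
      have hall : ∀ β, (1 - P) * h β * P = 0 := by
        intro β
        have expand : (1 - P) * h β * P = h β * P - P * (h β * P) := by
          noncomm_ring
        rw [expand, ← hc β, sub_self]
      simp [hall]
    have := hasDeriv_tr P H h T hT0 hTderiv ρ
    rw [hz] at this
    exact this
end

section
/- A subspace PH is collecting (T^t(PρP) = P T^t(PρP) P for all t > 0 and all states ρ) if and only if it is lazy (h_α P = P h_α P for all α) and additionally P(iH − ½ Σ_α h_α†h_α)P^⊥ = 0. -/
open Matrix
open scoped Matrix.Norms.L2Operator ComplexOrder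

section aux
variable {n : ℕ} {ι : Type*} [Fintype ι]
  (H : Matrix (Fin n) (Fin n) ℂ) (h : ι → Matrix (Fin n) (Fin n) ℂ)

lemma lindblad_eq (X : Matrix (Fin n) (Fin n) ℂ) :
    lindblad H h X = (∑ α, h α * X * (h α)ᴴ) -
      ((Complex.I • H + (1/2 : ℂ) • ∑ α, (h α)ᴴ * h α) * X +
        X * ((-Complex.I) • H + (1/2 : ℂ) • ∑ α, (h α)ᴴ * h α)) := by
  unfold lindblad
  rw [Finset.sum_sub_distrib, ← Finset.smul_sum, Finset.sum_add_distrib,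
    ← Matrix.sum_mul, ← Matrix.mul_sum]
  simp only [Matrix.add_mul, Matrix.mul_add, smul_mul_assoc, mul_smul_comm,
    smul_add, smul_sub]
  module

lemma lindblad_add (X Y : Matrix (Fin n) (Fin n) ℂ) :
    lindblad H h (X + Y) = lindblad H h X + lindblad H h Y := by
  simp only [lindblad_eq, Matrix.mul_add, Matrix.add_mul, Finset.sum_add_distrib]
  abel

lemma lindblad_smul (c : ℂ) (X : Matrix (Fin n) (Fin n) ℂ) :
    lindblad H h (c • X) = c • lindblad H h X := by
  simp only [lindblad_eq, mul_smul_comm, smul_mul_assoc, smul_add, smul_sub,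
    ← Finset.smul_sum]

lemma lindblad_sub (X Y : Matrix (Fin n) (Fin n) ℂ) :
    lindblad H h (X - Y) = lindblad H h X - lindblad H h Y := by
  rw [sub_eq_add_neg, lindblad_add, ← neg_one_smul ℂ Y, lindblad_smul,
    neg_one_smul, ← sub_eq_add_neg]

lemma sum_mul_conjTranspose_self_eq_zero {m : Type*} [Fintype m] [DecidableEq m]
    (A : ι → Matrix m m ℂ) (hsum : ∑ α, A α * (A α)ᴴ = 0) (α : ι) : A α = 0 := by
  have htr : ∑ α, (A α * (A α)ᴴ).trace = 0 := by
    rw [← Matrix.trace_sum, hsum, Matrix.trace_zero]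
  have hform : ∀ β, (A β * (A β)ᴴ).trace = ((∑ i, ∑ j, Complex.normSq (A β i j) : ℝ) : ℂ) := by
    intro β
    push_cast
    simp [Matrix.trace, Matrix.diag, Matrix.mul_apply, Matrix.conjTranspose_apply,
      Complex.mul_conj]
  rw [Finset.sum_congr rfl fun β _ => hform β, ← Complex.ofReal_sum,
    Complex.ofReal_eq_zero] at htr
  have hz : ∀ β ∈ Finset.univ, (0:ℝ) ≤ ∑ i, ∑ j, Complex.normSq (A β i j) := by
    intro β _
    exact Finset.sum_nonneg fun i _ => Finset.sum_nonneg fun j _ => Complex.normSq_nonneg _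
  have := (Finset.sum_eq_zero_iff_of_nonneg hz).mp htr α (Finset.mem_univ _)
  ext i j
  have hz2 : ∀ i' ∈ (Finset.univ : Finset m), (0:ℝ) ≤ ∑ j, Complex.normSq (A α i' j) := by
    intro i' _; exact Finset.sum_nonneg fun j _ => Complex.normSq_nonneg _
  have h3 := (Finset.sum_eq_zero_iff_of_nonneg hz2).mp this i (Finset.mem_univ _)
  have hz3 : ∀ j' ∈ (Finset.univ : Finset m), (0:ℝ) ≤ Complex.normSq (A α i j') := by
    intro j' _; exact Complex.normSq_nonneg _
  have h4 := (Finset.sum_eq_zero_iff_of_nonneg hz3).mp h3 j (Finset.mem_univ _)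
  simpa using Complex.normSq_eq_zero.mp h4

variable (P : Matrix (Fin n) (Fin n) ℂ)

lemma conjT_sum_hh : (∑ α, (h α)ᴴ * h α)ᴴ = ∑ α, (h α)ᴴ * h α := by
  rw [Matrix.conjTranspose_sum]
  simp [Matrix.conjTranspose_mul]

lemma key_inv (hH : Hᴴ = H) (hP : P * P = P) (hPh : Pᴴ = P)
    (hlazy : ∀ α, (1 - P) * (h α * P) = 0)
    (hQG : (1 - P) * ((Complex.I • H + (1/2 : ℂ) • ∑ α, (h α)ᴴ * h α) * P) = 0)
    (W : Matrix (Fin n) (Fin n) ℂ) (hW : P * W * P = W) :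
    lindblad H h W = P * lindblad H h W * P := by
  obtain ⟨Q, hQdef⟩ : ∃ Q, Q = 1 - P := ⟨_, rfl⟩
  obtain ⟨G, hGdef⟩ : ∃ G, G = Complex.I • H + (1/2 : ℂ) • ∑ α, (h α)ᴴ * h α := ⟨_, rfl⟩
  obtain ⟨G', hG'def⟩ : ∃ G', G' = (-Complex.I) • H + (1/2 : ℂ) • ∑ α, (h α)ᴴ * h α := ⟨_, rfl⟩
  rw [← hQdef] at hlazy hQG
  rw [← hGdef] at hQG
  have hQh : Qᴴ = Q := by
    rw [hQdef, Matrix.conjTranspose_sub, Matrix.conjTranspose_one, hPh]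
  have hGh : Gᴴ = G' := by
    rw [hGdef, hG'def, Matrix.conjTranspose_add, Matrix.conjTranspose_smul,
      Matrix.conjTranspose_smul, hH, conjT_sum_hh]
    congr 1
    · rw [Complex.star_def, Complex.conj_I]
    · norm_num
  have hQP : Q * P = 0 := by rw [hQdef, sub_mul, one_mul, hP, sub_self]
  have hPQ : P * Q = 0 := by rw [hQdef, mul_sub, mul_one, hP, sub_self]
  have lazy' : ∀ α, Q * h α * P = 0 := fun α => by rw [mul_assoc]; exact hlazy α
  have hlazyx : ∀ α (X : Matrix (Fin n) (Fin n) ℂ), Q * (h α * (P * X)) = 0 := fun α X => by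
    rw [← mul_assoc, ← mul_assoc, lazy' α, zero_mul]
  have hQG2 : Q * G * P = 0 := by rw [mul_assoc]; exact hQG
  have hQGx : ∀ X : Matrix (Fin n) (Fin n) ℂ, Q * (G * (P * X)) = 0 := fun X => by
    rw [← mul_assoc, ← mul_assoc, hQG2, zero_mul]
  have hQPx : ∀ X : Matrix (Fin n) (Fin n) ℂ, Q * (P * X) = 0 := fun X => by
    rw [← mul_assoc, hQP, zero_mul]
  have hPhQ : ∀ α, P * ((h α)ᴴ * Q) = 0 := fun α => by
    have := congrArg Matrix.conjTranspose (hlazy α)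
    simpa [Matrix.conjTranspose_mul, hPh, hQh, mul_assoc] using this
  have hPG'Q : P * (G' * Q) = 0 := by
    have := congrArg Matrix.conjTranspose hQG
    simpa [Matrix.conjTranspose_mul, hPh, hQh, hGh, mul_assoc] using this
  have QD : Q * lindblad H h W = 0 := by
    conv_lhs => rw [lindblad_eq, ← hW]
    rw [← hGdef, ← hG'def]
    simp only [mul_sub, mul_add, Finset.mul_sum, mul_assoc, hlazyx, hQGx, hQPx,
      mul_zero, Finset.sum_const_zero, add_zero, zero_add, sub_zero, sub_self]
  have DQ : lindblad H h W * Q = 0 := by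
    conv_lhs => rw [lindblad_eq, ← hW]
    rw [← hGdef, ← hG'def]
    simp only [sub_mul, add_mul, Finset.sum_mul, mul_assoc, hPhQ, hPG'Q, hPQ,
      mul_zero, Finset.sum_const_zero, add_zero, zero_add, sub_zero, sub_self]
  have h1 : P + Q = 1 := by rw [hQdef]; abel
  calc lindblad H h W = (P + Q) * lindblad H h W * (P + Q) := by rw [h1, one_mul, mul_one]
    _ = P * lindblad H h W * P := by
        rw [add_mul, QD, add_zero, mul_add, mul_assoc P (lindblad H h W) Q, DQ,
          mul_zero, add_zero]

end aux

/-- `P ℋ` is collecting iff it is lazy and `P (iH - ½ ∑ h_α† h_α) P^⊥ = 0`. -/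
theorem stmt5 {n : ℕ} {ι : Type*} [Fintype ι]
    (H : Matrix (Fin n) (Fin n) ℂ) (hH : H.IsHermitian)
    (h : ι → Matrix (Fin n) (Fin n) ℂ)
    (T : ℝ → Matrix (Fin n) (Fin n) ℂ →ₗ[ℂ] Matrix (Fin n) (Fin n) ℂ)
    (hT0 : T 0 = LinearMap.id)
    (hTderiv : ∀ (ρ : Matrix (Fin n) (Fin n) ℂ) (t : ℝ),
      HasDerivAt (fun s => T s ρ) (lindblad H h (T t ρ)) t)
    (P : Matrix (Fin n) (Fin n) ℂ) (hP : P * P = P) (hPh : Pᴴ = P) :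
    (∀ t > (0:ℝ), ∀ ρ : Matrix (Fin n) (Fin n) ℂ, ρ.PosSemidef → ρ.trace = 1 →
        T t (P * ρ * P) = P * T t (P * ρ * P) * P) ↔
      ((∀ α, h α * P = P * (h α * P)) ∧
        P * (Complex.I • H - (1/2 : ℂ) • ∑ α, (h α)ᴴ * h α) * (1 - P) = 0) := by
  have hHe : Hᴴ = H := hH
  obtain ⟨G, hGdef⟩ : ∃ G, G = Complex.I • H + (1/2 : ℂ) • ∑ α, (h α)ᴴ * h α := ⟨_, rfl⟩
  obtain ⟨G', hG'def⟩ : ∃ G', G' = (-Complex.I) • H + (1/2 : ℂ) • ∑ α, (h α)ᴴ * h α := ⟨_, rfl⟩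
  obtain ⟨Q, hQdef⟩ : ∃ Q, Q = (1 : Matrix (Fin n) (Fin n) ℂ) - P := ⟨_, rfl⟩
  have hQmh : Qᴴ = Q := by
    rw [hQdef, Matrix.conjTranspose_sub, Matrix.conjTranspose_one, hPh]
  have hQ1h : ((1:Matrix (Fin n) (Fin n) ℂ) - P)ᴴ = 1 - P := by
    rw [Matrix.conjTranspose_sub, Matrix.conjTranspose_one, hPh]
  have hmid : (Complex.I • H - (1/2 : ℂ) • ∑ α, (h α)ᴴ * h α)ᴴ = -G := by
    rw [Matrix.conjTranspose_sub, Matrix.conjTranspose_smul, Matrix.conjTranspose_smul,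
      hHe, conjT_sum_hh, hGdef]
    have h12 : star ((1:ℂ)/2) = 1/2 := by simp
    rw [h12, Complex.star_def, Complex.conj_I]
    module
  have hQP : Q * P = 0 := by
    rw [hQdef, sub_mul, one_mul, hP, sub_self]
  have hPQ : P * Q = 0 := by
    rw [hQdef, mul_sub, mul_one, hP, sub_self]
  have hPPx : ∀ X : Matrix (Fin n) (Fin n) ℂ, P * (P * X) = P * X := fun X => by
    rw [← mul_assoc, hP]
  have hQPx : ∀ X : Matrix (Fin n) (Fin n) ℂ, Q * (P * X) = 0 := fun X => by
    rw [← mul_assoc, hQP, zero_mul]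
  constructor
  · -- forward
    intro hc
    rcases Nat.eq_zero_or_pos n with hn | hn
    · subst hn
      constructor
      · intro α; ext i j; exact i.elim0
      · ext i j; exact i.elim0
    have hn0 : ((n:ℂ)) ≠ 0 := Nat.cast_ne_zero.mpr hn.ne'
    -- collecting for P itself
    have hcol : ∀ t > (0:ℝ), T t P = P * T t P * P := by
      intro t ht
      have hps : (Matrix.diagonal (fun _ : Fin n => ((n:ℂ))⁻¹)).PosSemidef := by
        refine Matrix.PosSemidef.diagonal fun i => ?_
        simp only [Pi.zero_apply]
        rw [show ((n:ℂ))⁻¹ = (((n:ℝ)⁻¹ : ℝ) : ℂ) by push_cast; ring]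
        exact Complex.zero_le_real.mpr (by positivity)
      have htr : (Matrix.diagonal (fun _ : Fin n => ((n:ℂ))⁻¹)).trace = 1 := by
        simp [Matrix.trace_diagonal, Finset.sum_const, Finset.card_univ, nsmul_eq_mul]
        exact mul_inv_cancel₀ hn0
      have hPρP : P * Matrix.diagonal (fun _ : Fin n => ((n:ℂ))⁻¹) * P = ((n:ℂ))⁻¹ • P := by
        rw [← Matrix.smul_one_eq_diagonal]
        rw [mul_smul_comm, smul_mul_assoc, mul_one, hP]
      have h1 := hc t ht _ hps htr
      rw [hPρP, LinearMap.map_smul, mul_smul_comm, smul_mul_assoc] at h1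
      exact smul_right_injective _ (inv_ne_zero hn0) h1
    -- derivative at 0 lies in the subspace
    have hd : HasDerivAt (fun s => T s P) (lindblad H h P) 0 := by
      have := hTderiv P 0
      rwa [hT0, LinearMap.id_coe, id_eq] at this
    have hC : IsClosed {W : Matrix (Fin n) (Fin n) ℂ | P * W * P = W} := by
      have hcont : Continuous fun W : Matrix (Fin n) (Fin n) ℂ => P * W * P :=
        (continuous_const.mul continuous_id).mul continuous_const
      exact isClosed_eq hcont continuous_id
    have hslope : Filter.Tendsto (slope (fun s => T s P) 0) (nhdsWithin 0 (Set.Ioi 0))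
        (nhds (lindblad H h P)) :=
      (hasDerivAt_iff_tendsto_slope.mp hd).mono_left
        (nhdsWithin_mono 0 fun x hx => Set.mem_compl_singleton_iff.mpr (ne_of_gt hx))
    have hmem : ∀ᶠ x in nhdsWithin 0 (Set.Ioi 0),
        slope (fun s => T s P) 0 x ∈ {W : Matrix (Fin n) (Fin n) ℂ | P * W * P = W} := by
      filter_upwards [self_mem_nhdsWithin] with x hx
      have hx0 : (0:ℝ) < x := hx
      simp only [Set.mem_setOf_eq, slope_def_module, sub_zero, hT0, LinearMap.id_coe, id_eq]
      rw [mul_smul_comm, smul_mul_assoc]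
      congr 1
      rw [mul_sub, sub_mul, ← hcol x hx0, hP, hP]
    have hDP : P * lindblad H h P * P = lindblad H h P :=
      hC.mem_of_tendsto hslope hmem
    -- block computations
    have key1 : Q * lindblad H h P * Q = ∑ α, (Q * (h α * P)) * (Q * (h α * P))ᴴ := by
      rw [lindblad_eq, ← hGdef, ← hG'def]
      simp only [Matrix.conjTranspose_mul, hPh, hQmh]
      simp only [sub_mul, mul_sub, add_mul, mul_add, Finset.sum_mul, Finset.mul_sum,
        mul_assoc, hPQ, hQPx, hPPx, mul_zero, zero_mul, add_zero, zero_add, sub_zero,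
        Finset.sum_const_zero]
    have hzero1 : Q * lindblad H h P * Q = 0 := by
      rw [← hDP]
      simp only [← mul_assoc]
      rw [hQP]
      simp
    have hsum0 : ∑ α, (Q * (h α * P)) * (Q * (h α * P))ᴴ = 0 := by
      rw [← key1]; exact hzero1
    have hlz0 : ∀ α, Q * (h α * P) = 0 :=
      fun α => sum_mul_conjTranspose_self_eq_zero (fun α => Q * (h α * P)) hsum0 α
    have hlazyx : ∀ α (X : Matrix (Fin n) (Fin n) ℂ), Q * (h α * (P * X)) = 0 := by
      intro α X
      have h0 : Q * h α * P = 0 := by rw [mul_assoc]; exact hlz0 α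
      rw [← mul_assoc, ← mul_assoc, h0, zero_mul]
    refine ⟨fun α => ?_, ?_⟩
    · have := hlz0 α
      rw [hQdef, sub_mul, one_mul, sub_eq_zero] at this
      exact this
    · -- second condition
      have key2 : Q * lindblad H h P * P = -(Q * (G * P)) := by
        rw [lindblad_eq, ← hGdef, ← hG'def]
        simp only [sub_mul, mul_sub, add_mul, mul_add, Finset.sum_mul, Finset.mul_sum,
          mul_assoc, hP, hlazyx, hQPx, neg_mul, mul_zero, zero_mul, add_zero, zero_add,
          sub_zero, zero_sub, Finset.sum_const_zero]
      have hzero2 : Q * lindblad H h P * P = 0 := by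
        rw [← hDP]
        simp only [← mul_assoc]
        rw [hQP]
        simp
      have hQGP : Q * (G * P) = 0 := by
        have h0 := hzero2
        rw [key2, neg_eq_zero] at h0
        exact h0
      rw [hQdef] at hQGP
      rw [← Matrix.conjTranspose_eq_zero, Matrix.conjTranspose_mul, Matrix.conjTranspose_mul,
        hmid, hQ1h, hPh, neg_mul, mul_neg, neg_eq_zero]
      exact hQGP
  · -- backward
    rintro ⟨hlz, hcond⟩ t ht ρ _ _
    have hlazy : ∀ α, (1 - P) * (h α * P) = 0 := by
      intro α
      rw [sub_mul, one_mul, ← hlz α, sub_self]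
    have hQGP : (1 - P) * (G * P) = 0 := by
      have h0 := congrArg Matrix.conjTranspose hcond
      rw [Matrix.conjTranspose_zero, Matrix.conjTranspose_mul, Matrix.conjTranspose_mul,
        hmid, hQ1h, hPh, neg_mul, mul_neg, neg_eq_zero] at h0
      exact h0
    have hkey := key_inv H h P hHe hP hPh hlazy (by rw [← hGdef]; exact hQGP)
    -- set up linear maps
    let L : Matrix (Fin n) (Fin n) ℂ →ₗ[ℂ] Matrix (Fin n) (Fin n) ℂ :=
      { toFun := lindblad H h
        map_add' := lindblad_add H h
        map_smul' := lindblad_smul H h }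
    let πP : Matrix (Fin n) (Fin n) ℂ →ₗ[ℂ] Matrix (Fin n) (Fin n) ℂ :=
      { toFun := fun W => P * W * P
        map_add' := fun A B => by simp [mul_add, add_mul]
        map_smul' := fun c A => by simp [mul_smul_comm, smul_mul_assoc] }
    let Φ := LinearMap.toContinuousLinearMap (L - πP ∘ₗ L)
    have hΦapp : ∀ W, Φ W = lindblad H h W - P * lindblad H h W * P := fun W => rfl
    set X := P * ρ * P with hXdef
    have hXP : P * X * P = X := by
      rw [hXdef]
      simp only [← mul_assoc, hP]
      rw [mul_assoc, hP]
    have hw : ∀ s, HasDerivAt (fun u => T u X - P * T u X * P)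
        (Φ (T s X - P * T s X * P)) s := by
      intro s
      have h1 := hTderiv X s
      have h2 : HasDerivAt (fun u => P * T u X * P) (P * lindblad H h (T s X) * P) s := by
        have h3 := (((πP.toContinuousLinearMap).restrictScalars
          ℝ).hasFDerivAt (x := T s X)).comp_hasDerivAt s h1
        exact h3
      have h3 := h1.sub h2
      have hval : Φ (T s X - P * T s X * P) =
          lindblad H h (T s X) - P * lindblad H h (T s X) * P := by
        rw [hΦapp, lindblad_sub, mul_sub, sub_mul]
        have hkeyP := hkey (P * T s X * P)
          (by simp only [← mul_assoc, hP]; rw [mul_assoc, hP])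
        rw [← hkeyP]
        abel
      rw [hval]
      exact h3
    have hw0 : T (0:ℝ) X - P * T 0 X * P = 0 := by
      rw [hT0, LinearMap.id_coe, id_eq, hXP, sub_self]
    have hcontw : ContinuousOn (fun u => T u X - P * T u X * P) (Set.Icc 0 t) :=
      (continuous_iff_continuousAt.mpr fun s => (hw s).continuousAt).continuousOn
    have huniq := ODE_solution_unique (v := fun _ z => Φ z)
      (g := fun _ => (0 : Matrix (Fin n) (Fin n) ℂ)) (fun _ => Φ.lipschitz)
      hcontw (fun s _ => (hw s).hasDerivWithinAt)
      continuousOn_const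
      (fun s _ => by
        simpa using (hasDerivAt_const s (0 : Matrix (Fin n) (Fin n) ℂ)).hasDerivWithinAt)
      (by simpa using hw0)
    have hfin := huniq (Set.mem_Icc.mpr ⟨ht.le, le_rfl⟩)
    exact sub_eq_zero.mp hfin
end

section
/- For a Lindblad generator, the condition D(PρP) = P D(PρP) P for all matrices ρ is equivalent to T^t(PρP) = P T^t(PρP) P for all t ≥ 0 and all ρ. -/
open Matrix
open scoped Matrix.Norms.L2Operator ComplexOrder

/-- The Lindblad generator as a linear map. -/
noncomputable def lindbladLM {n : ℕ} {ι : Type*} [Fintype ι]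
    (H : Matrix (Fin n) (Fin n) ℂ) (h : ι → Matrix (Fin n) (Fin n) ℂ) :
    Matrix (Fin n) (Fin n) ℂ →ₗ[ℂ] Matrix (Fin n) (Fin n) ℂ :=
  -Complex.I • (LinearMap.mulLeft ℂ H - LinearMap.mulRight ℂ H) +
    ∑ α, ((LinearMap.mulRight ℂ (h α)ᴴ).comp (LinearMap.mulLeft ℂ (h α)) -
      (1/2 : ℂ) • (LinearMap.mulLeft ℂ ((h α)ᴴ * h α) + LinearMap.mulRight ℂ ((h α)ᴴ * h α)))

lemma lindbladLM_apply {n : ℕ} {ι : Type*} [Fintype ι]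
    (H : Matrix (Fin n) (Fin n) ℂ) (h : ι → Matrix (Fin n) (Fin n) ℂ)
    (ρ : Matrix (Fin n) (Fin n) ℂ) : lindbladLM H h ρ = lindblad H h ρ := by
  simp [lindbladLM, lindblad, LinearMap.sum_apply, LinearMap.mulLeft_apply,
    LinearMap.mulRight_apply, mul_assoc]

/-- The first-order condition `D(PρP) = P D(PρP) P` for all `ρ` is equivalent to
`T^t(PρP) = P T^t(PρP) P` for all `t ≥ 0` and all `ρ`. -/
theorem stmt6 {n : ℕ} {ι : Type*} [Fintype ι]
    (H : Matrix (Fin n) (Fin n) ℂ) (hH : H.IsHermitian)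
    (h : ι → Matrix (Fin n) (Fin n) ℂ)
    (T : ℝ → Matrix (Fin n) (Fin n) ℂ →ₗ[ℂ] Matrix (Fin n) (Fin n) ℂ)
    (hT0 : T 0 = LinearMap.id)
    (hTderiv : ∀ (ρ : Matrix (Fin n) (Fin n) ℂ) (t : ℝ),
      HasDerivAt (fun s => T s ρ) (lindblad H h (T t ρ)) t)
    (P : Matrix (Fin n) (Fin n) ℂ) (hP : P * P = P) (hPh : Pᴴ = P) :
    (∀ ρ : Matrix (Fin n) (Fin n) ℂ,
        lindblad H h (P * ρ * P) = P * lindblad H h (P * ρ * P) * P) ↔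
      (∀ t ≥ (0:ℝ), ∀ ρ : Matrix (Fin n) (Fin n) ℂ,
        T t (P * ρ * P) = P * T t (P * ρ * P) * P) := by
  classical
  set Φ : Matrix (Fin n) (Fin n) ℂ →ₗ[ℂ] Matrix (Fin n) (Fin n) ℂ :=
    (LinearMap.mulRight ℂ P).comp (LinearMap.mulLeft ℂ P) with hΦ
  have hΦ_apply : ∀ σ, Φ σ = P * σ * P := by
    intro σ; simp [hΦ, mul_assoc]
  set M : Matrix (Fin n) (Fin n) ℂ →ₗ[ℂ] Matrix (Fin n) (Fin n) ℂ :=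
    lindbladLM H h - Φ.comp (lindbladLM H h) with hM
  have hM_apply : ∀ σ, M σ = lindblad H h σ - P * lindblad H h σ * P := by
    intro σ
    simp only [hM, LinearMap.sub_apply, LinearMap.comp_apply, hΦ_apply, lindbladLM_apply]
  have hPP : ∀ σ : Matrix (Fin n) (Fin n) ℂ, P * (P * σ * P) * P = P * σ * P := by
    intro σ
    rw [← mul_assoc, ← mul_assoc, hP, mul_assoc, hP]
  constructor
  · intro hfirst t ht ρ
    have hMΦ : ∀ σ, M (P * σ * P) = 0 := by
      intro σ; rw [hM_apply]; exact sub_eq_zero.mpr (hfirst σ)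
    set σ₀ : Matrix (Fin n) (Fin n) ℂ := P * ρ * P with hσ₀
    set g : ℝ → Matrix (Fin n) (Fin n) ℂ := fun s => T s σ₀ - P * T s σ₀ * P with hg
    have hKlip : LipschitzWith ‖LinearMap.toContinuousLinearMap M‖₊
        (fun x => M x) := (LinearMap.toContinuousLinearMap M).lipschitz
    have hgderiv : ∀ s : ℝ, HasDerivAt g (M (g s)) s := by
      intro s
      have h1 : HasDerivAt (fun u => T u σ₀) (lindblad H h (T s σ₀)) s := hTderiv σ₀ s
      have h2 : HasDerivAt (fun u => P * T u σ₀ * P)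
          (P * lindblad H h (T s σ₀) * P) s := (h1.const_mul P).mul_const P
      have h3 := h1.sub h2
      have hMg : M (g s) = lindblad H h (T s σ₀) - P * lindblad H h (T s σ₀) * P := by
        rw [hg]
        simp only [map_sub]
        rw [hMΦ (T s σ₀), sub_zero, hM_apply]
      rw [hMg]
      exact h3
    have hg0 : g 0 = 0 := by
      show T 0 σ₀ - P * T 0 σ₀ * P = 0
      rw [hT0]
      show σ₀ - P * σ₀ * P = 0
      rw [hσ₀, hPP]
      exact sub_self _
    have hzero : ∀ s ∈ Set.Ico (0:ℝ) t, HasDerivWithinAt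
        (fun _ : ℝ => (0 : Matrix (Fin n) (Fin n) ℂ))
        (M ((fun _ : ℝ => (0 : Matrix (Fin n) (Fin n) ℂ)) s)) (Set.Ici s) s := by
      intro s _
      simpa using (hasDerivWithinAt_const (𝕜 := ℝ) s (Set.Ici s)
        (0 : Matrix (Fin n) (Fin n) ℂ))
    have huniq := ODE_solution_unique (v := fun _ x => M x)
      (f := g) (g := fun _ => (0 : Matrix (Fin n) (Fin n) ℂ)) (a := 0) (b := t)
      (fun _ => hKlip)
      (fun s _ => (hgderiv s).continuousAt.continuousWithinAt)
      (fun s _ => (hgderiv s).hasDerivWithinAt)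
      (continuousOn_const)
      hzero
      (by simpa using hg0)
    have hgt : g t = 0 := huniq (Set.right_mem_Icc.mpr ht)
    exact sub_eq_zero.mp hgt
  · intro hsemi ρ
    set σ₀ : Matrix (Fin n) (Fin n) ℂ := P * ρ * P with hσ₀
    set g : ℝ → Matrix (Fin n) (Fin n) ℂ := fun s => T s σ₀ - P * T s σ₀ * P with hg
    have h1 : HasDerivAt (fun u => T u σ₀) (lindblad H h (T 0 σ₀)) 0 := hTderiv σ₀ 0
    have h2 : HasDerivAt (fun u => P * T u σ₀ * P)
        (P * lindblad H h (T 0 σ₀) * P) 0 := (h1.const_mul P).mul_const P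
    have h3 : HasDerivAt g (lindblad H h (T 0 σ₀) - P * lindblad H h (T 0 σ₀) * P) 0 :=
      h1.sub h2
    have hgzero : ∀ s ∈ Set.Ici (0:ℝ), g s = 0 := by
      intro s hs
      show T s σ₀ - P * T s σ₀ * P = 0
      exact sub_eq_zero.mpr (hsemi s hs ρ)
    have hd1 : HasDerivWithinAt g (lindblad H h (T 0 σ₀) - P * lindblad H h (T 0 σ₀) * P)
        (Set.Ici 0) 0 := h3.hasDerivWithinAt
    have hd2 : HasDerivWithinAt g (0 : Matrix (Fin n) (Fin n) ℂ) (Set.Ici 0) 0 := by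
      have hc : HasDerivWithinAt (fun _ : ℝ => (0 : Matrix (Fin n) (Fin n) ℂ))
          (0 : Matrix (Fin n) (Fin n) ℂ) (Set.Ici 0) 0 := hasDerivWithinAt_const 0 _ _
      exact hc.congr hgzero (hgzero 0 Set.self_mem_Ici)
    have hU : UniqueDiffWithinAt ℝ (Set.Ici (0:ℝ)) 0 :=
      uniqueDiffOn_Ici 0 0 Set.self_mem_Ici
    have hEqd : lindblad H h (T 0 σ₀) - P * lindblad H h (T 0 σ₀) * P = 0 := by
      rw [← hd1.derivWithin hU, hd2.derivWithin hU]
    have hT0σ : T 0 σ₀ = σ₀ := by rw [hT0]; rfl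
    rw [hT0σ] at hEqd
    exact sub_eq_zero.mp hEqd
end

section
/- If ρ is a stationary state of a Lindblad generator and P is the orthogonal projector onto the range of ρ, then the subspace PH is collecting: h_α P = P h_α P for all α and P(iH − ½ Σ_α h_α†h_α)P^⊥ = 0. -/
open Matrix
open scoped Matrix.Norms.L2Operator ComplexOrder MatrixOrder

private lemma aux_eq_zero_of_mulVec {n : ℕ} (X : Matrix (Fin n) (Fin n) ℂ)
    (hX : ∀ v, X *ᵥ v = 0) : X = 0 := by
  ext i j
  simpa [Matrix.mulVec_single] using congrFun (hX (Pi.single j 1)) i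

private lemma aux_sum_mulVec {n : ℕ} {ι : Type*} [Fintype ι]
    (f : ι → Matrix (Fin n) (Fin n) ℂ) (v : Fin n → ℂ) :
    (∑ β, f β) *ᵥ v = ∑ β, f β *ᵥ v := by
  ext i
  simp only [Matrix.mulVec, dotProduct, Finset.sum_apply, Matrix.sum_apply,
    Finset.sum_mul]
  exact Finset.sum_comm

private lemma aux_dot_sum {n : ℕ} {ι : Type*} [Fintype ι]
    (v : Fin n → ℂ) (w : ι → Fin n → ℂ) :
    v ⬝ᵥ (∑ β, w β) = ∑ β, v ⬝ᵥ w β := by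
  simp only [dotProduct, Finset.sum_apply, Finset.mul_sum]
  exact Finset.sum_comm

/-- If `ρ` is a stationary state and `P` projects onto its range, then `P ℋ` is
collecting: lazy, and `P (iH - ½ ∑ h_α† h_α) P^⊥ = 0`. -/
theorem stmt7 {n : ℕ} {ι : Type*} [Fintype ι]
    (H : Matrix (Fin n) (Fin n) ℂ) (hH : H.IsHermitian)
    (h : ι → Matrix (Fin n) (Fin n) ℂ)
    (ρ : Matrix (Fin n) (Fin n) ℂ) (hρ : ρ.PosSemidef) (htr : ρ.trace = 1)
    (hstat : lindblad H h ρ = 0)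
    (P : Matrix (Fin n) (Fin n) ℂ) (hP : P * P = P) (hPh : Pᴴ = P)
    (hrange : LinearMap.range ρ.mulVecLin = LinearMap.range P.mulVecLin) :
    (∀ α, h α * P = P * (h α * P)) ∧
      P * (Complex.I • H - (1/2 : ℂ) • ∑ α, (h α)ᴴ * h α) * (1 - P) = 0 := by
  set Q : Matrix (Fin n) (Fin n) ℂ := 1 - P with hQdef
  have hQH : Qᴴ = Q := by rw [hQdef]; simp [hPh]
  -- P acts as identity on the range of ρ
  have hPρ : P * ρ = ρ := by
    apply sub_eq_zero.mp
    apply aux_eq_zero_of_mulVec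
    intro v
    obtain ⟨w, hw⟩ : ρ *ᵥ v ∈ LinearMap.range P.mulVecLin := by
      rw [← hrange]; exact ⟨v, rfl⟩
    rw [Matrix.mulVecLin_apply] at hw
    rw [Matrix.sub_mulVec, ← Matrix.mulVec_mulVec, ← hw, Matrix.mulVec_mulVec, hP, hw,
      sub_self]
  have hρP : ρ * P = ρ := by
    have := congrArg Matrix.conjTranspose hPρ
    rwa [Matrix.conjTranspose_mul, hPh, hρ.1] at this
  have hρQ : ρ * Q = 0 := by rw [hQdef, Matrix.mul_sub, Matrix.mul_one, hρP, sub_self]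
  have hQρ : Q * ρ = 0 := by rw [hQdef, Matrix.sub_mul, Matrix.one_mul, hPρ, sub_self]
  -- X ρ = 0 → X P = 0
  have hkill : ∀ X : Matrix (Fin n) (Fin n) ℂ, X * ρ = 0 → X * P = 0 := by
    intro X hX
    apply aux_eq_zero_of_mulVec
    intro v
    obtain ⟨w, hw⟩ : P *ᵥ v ∈ LinearMap.range ρ.mulVecLin := by
      rw [hrange]; exact ⟨v, rfl⟩
    rw [Matrix.mulVecLin_apply] at hw
    rw [← Matrix.mulVec_mulVec, ← hw, Matrix.mulVec_mulVec, hX, Matrix.zero_mulVec]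
  -- helper rewrite lemmas
  have hQρ' : ∀ X, Q * (ρ * X) = 0 := fun X => by
    rw [← Matrix.mul_assoc, hQρ, Matrix.zero_mul]
  -- rewriting each summand as C Cᴴ
  have hform : ∀ β, Q * (h β * (ρ * ((h β)ᴴ * Q))) =
      (Q * h β * CFC.sqrt ρ) * (Q * h β * CFC.sqrt ρ)ᴴ := by
    intro β
    have hs : (CFC.sqrt ρ)ᴴ = CFC.sqrt ρ := (CFC.sqrt_nonneg ρ).posSemidef.1
    have hss : ∀ X, CFC.sqrt ρ * (CFC.sqrt ρ * X) = ρ * X := fun X => by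
      rw [← Matrix.mul_assoc, CFC.sqrt_mul_sqrt_self ρ hρ.nonneg]
    simp only [Matrix.conjTranspose_mul, hs, hQH, Matrix.mul_assoc, hss]
  -- Step 1: Q D(ρ) Q = ∑ Q h ρ hᴴ Q
  have e1 : (0 : Matrix (Fin n) (Fin n) ℂ) = ∑ α, Q * (h α * (ρ * ((h α)ᴴ * Q))) := by
    have := congrArg (fun X => Q * X * Q) hstat
    simpa [lindblad, Matrix.add_mul, Matrix.mul_add, Matrix.sub_mul, Matrix.mul_sub,
      Matrix.sum_mul, Matrix.mul_sum, Matrix.smul_mul, Matrix.mul_smul,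
      Matrix.mul_assoc, hρQ, hQρ'] using this.symm
  have hQhρ : ∀ α, Q * (h α * ρ) = 0 := by
    intro α
    have hM0 : Q * (h α * (ρ * ((h α)ᴴ * Q))) = 0 := by
      apply aux_eq_zero_of_mulVec
      intro v
      have hsum : ∑ β, star v ⬝ᵥ (Q * (h β * (ρ * ((h β)ᴴ * Q)))) *ᵥ v = 0 := by
        rw [← aux_dot_sum, ← aux_sum_mulVec, ← e1]
        simp
      have hnn : ∀ β ∈ Finset.univ,
          (0:ℂ) ≤ star v ⬝ᵥ (Q * (h β * (ρ * ((h β)ᴴ * Q)))) *ᵥ v := by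
        intro β _
        rw [hform β]
        exact (Matrix.posSemidef_self_mul_conjTranspose _).dotProduct_mulVec_nonneg v
      have h0 := (Finset.sum_eq_zero_iff_of_nonneg hnn).mp hsum α (Finset.mem_univ α)
      have hps : (Q * (h α * (ρ * ((h α)ᴴ * Q)))).PosSemidef := by
        rw [hform α]; exact Matrix.posSemidef_self_mul_conjTranspose _
      exact (hps.dotProduct_mulVec_zero_iff v).mp h0
    have hCB : Q * h α * CFC.sqrt ρ = 0 :=
      Matrix.self_mul_conjTranspose_eq_zero.mp ((hform α).symm.trans hM0)
    have : ρ = CFC.sqrt ρ * CFC.sqrt ρ := (CFC.sqrt_mul_sqrt_self ρ hρ.nonneg).symm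
    rw [← Matrix.mul_assoc, this, ← Matrix.mul_assoc, hCB, Matrix.zero_mul]
  have hQhP : ∀ α, Q * h α * P = 0 := fun α =>
    hkill _ (by rw [Matrix.mul_assoc]; exact hQhρ α)
  refine ⟨?_, ?_⟩
  · intro α
    have h0 : h α * P - P * (h α * P) = Q * h α * P := by rw [hQdef]; noncomm_ring
    exact sub_eq_zero.mp (h0.trans (hQhP α))
  · -- Step 2 : Q (iH + ½ S) ρ = 0
    have hQhρ' : ∀ α X, Q * (h α * (ρ * X)) = 0 := by
      intro α X
      rw [show Q * (h α * (ρ * X)) = (Q * (h α * ρ)) * X by noncomm_ring, hQhρ,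
        Matrix.zero_mul]
    have e2 : Q * (Complex.I • H + (1/2 : ℂ) • ∑ α, (h α)ᴴ * h α) * ρ =
        -(Q * lindblad H h ρ * P) := by
      simp only [lindblad, Matrix.add_mul, Matrix.mul_add, Matrix.sub_mul, Matrix.mul_sub,
        Matrix.sum_mul, Matrix.mul_sum, Matrix.smul_mul, Matrix.mul_smul, neg_smul,
        Matrix.neg_mul, Matrix.mul_neg, Matrix.mul_assoc, hρP, hQρ', hQhρ',
        Matrix.mul_zero, Matrix.zero_mul, smul_zero, neg_zero, zero_add, add_zero,
        sub_zero, zero_sub, Finset.smul_sum, Finset.sum_neg_distrib, neg_neg]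
      abel
    rw [hstat, Matrix.mul_zero, Matrix.zero_mul, neg_zero] at e2
    have e3 : Q * (Complex.I • H + (1/2 : ℂ) • ∑ α, (h α)ᴴ * h α) * P = 0 := hkill _ e2
    have hSH : (∑ α, (h α)ᴴ * h α)ᴴ = ∑ α, (h α)ᴴ * h α := by
      simp [Matrix.conjTranspose_sum, Matrix.conjTranspose_mul]
    have h12 : (starRingEnd ℂ) (1/2 : ℂ) = 1/2 := by
      norm_num [Complex.ext_iff]
    have key2 : P * (Complex.I • H - (1/2 : ℂ) • ∑ α, (h α)ᴴ * h α) * Q =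
        -((Q * (Complex.I • H + (1/2 : ℂ) • ∑ α, (h α)ᴴ * h α) * P)ᴴ) := by
      rw [Matrix.conjTranspose_mul, Matrix.conjTranspose_mul, hPh, hQH,
        Matrix.conjTranspose_add, Matrix.conjTranspose_smul, Matrix.conjTranspose_smul,
        hH.eq, hSH, Complex.star_def, Complex.conj_I, h12]
      rw [show Complex.I • H - (1/2 : ℂ) • ∑ α, (h α)ᴴ * h α =
          -((-Complex.I) • H + (1/2 : ℂ) • ∑ α, (h α)ᴴ * h α) by module]
      rw [Matrix.mul_neg, Matrix.neg_mul, Matrix.mul_assoc]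
    rw [key2, e3, Matrix.conjTranspose_zero, neg_zero]
end

section
/- If the stationary eigenmatrix σ of a Lindblad generator (D(σ)=0) is self-adjoint but not positive semidefinite, and σ = ρ₊ − ρ₋ is its Jordan decomposition into positive and negative parts, then both ρ₊ and ρ₋ are separately stationary: D(ρ₊) = D(ρ₋) = 0. -/
open Matrix
open scoped Matrix.Norms.L2Operator ComplexOrder

open scoped MatrixOrder in
/-- square root of a positive semidefinite matrix (via the continuous functional calculus). -/
noncomputable def Matrix.PosSemidef.sqrt {n : ℕ} {M : Matrix (Fin n) (Fin n) ℂ}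
    (_hM : M.PosSemidef) : Matrix (Fin n) (Fin n) ℂ :=
  CFC.sqrt M

open scoped MatrixOrder in
lemma Matrix.PosSemidef.posSemidef_sqrt {n : ℕ} {M : Matrix (Fin n) (Fin n) ℂ}
    (hM : M.PosSemidef) : hM.sqrt.PosSemidef :=
  (CFC.sqrt_nonneg M).posSemidef

open scoped MatrixOrder in
lemma Matrix.PosSemidef.sqrt_mul_self {n : ℕ} {M : Matrix (Fin n) (Fin n) ℂ}
    (hM : M.PosSemidef) : hM.sqrt * hM.sqrt = M :=
  CFC.sqrt_mul_sqrt_self M hM.nonneg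

namespace Stmt11Aux

variable {n : ℕ} {ι : Type*} [Fintype ι]

/-- trace of `Bᴴ * B` is nonnegative. -/
lemma trace_ct_nonneg (B : Matrix (Fin n) (Fin n) ℂ) : 0 ≤ (Bᴴ * B).trace := by
  rw [Matrix.trace]
  refine Finset.sum_nonneg fun i _ => ?_
  simpa [Matrix.diag, Matrix.mul_apply, Matrix.conjTranspose_apply] using
    Finset.sum_nonneg fun j (_ : j ∈ Finset.univ) => star_mul_self_nonneg (B j i)

lemma eq_zero_of_trace_ct (B : Matrix (Fin n) (Fin n) ℂ) (h : (Bᴴ * B).trace = 0) : B = 0 := by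
  have h1 : ∀ i, (Bᴴ * B) i i = 0 := by
    have := (Finset.sum_eq_zero_iff_of_nonneg (fun i (_ : i ∈ Finset.univ) => ?_)).mp h
    · intro i; simpa using this i (Finset.mem_univ i)
    · simpa [Matrix.diag, Matrix.mul_apply, Matrix.conjTranspose_apply] using
        Finset.sum_nonneg fun j (_ : j ∈ Finset.univ) => star_mul_self_nonneg (B j i)
  ext i j
  have h2 : dotProduct (star (fun k => B k j)) (fun k => B k j) = 0 := by
    simpa [Matrix.mul_apply, Matrix.conjTranspose_apply, dotProduct] using h1 j
  have := dotProduct_star_self_eq_zero.mp h2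
  simpa using congr_fun this i

lemma psd_trace_nonneg {M : Matrix (Fin n) (Fin n) ℂ} (hM : M.PosSemidef) : 0 ≤ M.trace := by
  have h1 : (hM.sqrt)ᴴ * hM.sqrt = M := by
    rw [hM.posSemidef_sqrt.1, hM.sqrt_mul_self]
  rw [← h1]
  exact trace_ct_nonneg _

lemma psd_eq_zero_of_trace {M : Matrix (Fin n) (Fin n) ℂ} (hM : M.PosSemidef)
    (h : M.trace = 0) : M = 0 := by
  have h1 : (hM.sqrt)ᴴ * hM.sqrt = M := by
    rw [hM.posSemidef_sqrt.1, hM.sqrt_mul_self]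
  have h2 : hM.sqrt = 0 := eq_zero_of_trace_ct _ (by rw [h1, h])
  rw [← hM.sqrt_mul_self, h2, Matrix.mul_zero]

lemma conj_cancel {ρ M : Matrix (Fin n) (Fin n) ℂ} (hρ : ρ.PosSemidef)
    (hz : M * ρ * Mᴴ = 0) : M * ρ = 0 := by
  have hS : hρ.sqrt * hρ.sqrt = ρ := hρ.sqrt_mul_self
  have hSH : (hρ.sqrt)ᴴ = hρ.sqrt := hρ.posSemidef_sqrt.1
  have h1 : (M * hρ.sqrt) * (M * hρ.sqrt)ᴴ = 0 := by
    rw [Matrix.conjTranspose_mul, hSH]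
    calc M * hρ.sqrt * (hρ.sqrt * Mᴴ) = M * (hρ.sqrt * hρ.sqrt) * Mᴴ := by
          simp only [Matrix.mul_assoc]
      _ = 0 := by rw [hS, hz]
  have h2 : M * hρ.sqrt = 0 := self_mul_conjTranspose_eq_zero.mp h1
  calc M * ρ = M * hρ.sqrt * hρ.sqrt := by rw [Matrix.mul_assoc, hS]
    _ = 0 := by rw [h2, Matrix.zero_mul]

lemma exists_suppProj {ρ : Matrix (Fin n) (Fin n) ℂ} (hρ : ρ.IsHermitian) :
    ∃ P : Matrix (Fin n) (Fin n) ℂ, Pᴴ = P ∧ P * P = P ∧ P * ρ = ρ ∧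
      ∀ M : Matrix (Fin n) (Fin n) ℂ, M * ρ = 0 → M * P = 0 := by
  obtain ⟨U, d, hUU, hspec⟩ :
      ∃ (U : Matrix (Fin n) (Fin n) ℂ) (d : Fin n → ℝ),
        star U * U = 1 ∧ ρ = U * diagonal (RCLike.ofReal ∘ d) * star U :=
    ⟨_, _, Unitary.coe_star_mul_self _, hρ.spectral_theorem⟩
  set E : Matrix (Fin n) (Fin n) ℂ := diagonal (fun i => if d i = 0 then (0:ℂ) else 1) with hE
  have hEE : E * E = E := by
    rw [hE, diagonal_mul_diagonal]
    ext i j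
    by_cases hij : i = j
    · subst hij; by_cases h : d i = 0 <;> simp [diagonal_apply_eq, h]
    · simp [diagonal_apply_ne _ hij]
  have hED : E * diagonal (RCLike.ofReal ∘ d) = diagonal (RCLike.ofReal ∘ d) := by
    rw [hE, diagonal_mul_diagonal]
    ext i j
    by_cases hij : i = j
    · subst hij; by_cases h : d i = 0 <;> simp [diagonal_apply_eq, h, Function.comp]
    · simp [diagonal_apply_ne _ hij]
  refine ⟨U * E * star U, ?_, ?_, ?_, ?_⟩
  · simp only [conjTranspose_mul, conjTranspose_conjTranspose, star_eq_conjTranspose,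
      diagonal_conjTranspose, Matrix.mul_assoc, hE]
    congr 2
    · ext i j
      by_cases hij : i = j
      · subst hij; by_cases h : d i = 0 <;> simp [diagonal_apply_eq, h, Pi.star_def]
      · simp [diagonal_apply_ne _ hij, Pi.star_def]
  · calc U * E * star U * (U * E * star U) = U * (E * (star U * U) * E) * star U := by
          simp only [Matrix.mul_assoc]
      _ = U * E * star U := by
          rw [hUU, Matrix.mul_one, hEE]
  · rw [hspec]
    calc U * E * star U * (U * diagonal (RCLike.ofReal ∘ d) * star U)
        = U * (E * (star U * U) * diagonal (RCLike.ofReal ∘ d)) * star U := by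
          simp only [Matrix.mul_assoc]
      _ = U * diagonal (RCLike.ofReal ∘ d) * star U := by
          rw [hUU, Matrix.mul_one, hED]
  · intro M hM
    rw [hspec] at hM
    have h2 : M * U * diagonal (RCLike.ofReal ∘ d) = 0 := by
      have h := congrArg (· * U) hM
      simp only [Matrix.zero_mul] at h
      simp only [Matrix.mul_assoc] at h
      rw [hUU] at h
      simp only [Matrix.mul_one] at h
      simp only [Matrix.mul_assoc]
      exact h
    have h3 : M * U * E = 0 := by
      ext i j
      have h4 := congrFun (congrFun h2 i) j
      simp only [Matrix.mul_diagonal, Matrix.zero_apply, Function.comp, hE] at h4 ⊢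
      by_cases h : d j = 0
      · simp [h]
      · have hj : (d j : ℂ) ≠ 0 := by exact_mod_cast h
        simp only [h, if_false, mul_one]
        exact (mul_eq_zero.mp h4).resolve_right hj
    calc M * (U * E * star U) = M * U * E * star U := by simp only [Matrix.mul_assoc]
      _ = 0 := by rw [h3, Matrix.zero_mul]

variable (H : Matrix (Fin n) (Fin n) ℂ) (h : ι → Matrix (Fin n) (Fin n) ℂ)

lemma lindblad_sub (a b : Matrix (Fin n) (Fin n) ℂ) :
    lindblad H h (a - b) = lindblad H h a - lindblad H h b := by
  have key : ∀ x, h x * (a-b) * (h x)ᴴ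
      - (1/2:ℂ) • ((h x)ᴴ * h x * (a-b) + (a-b) * ((h x)ᴴ * h x))
      = (h x * a * (h x)ᴴ - (1/2:ℂ) • ((h x)ᴴ * h x * a + a * ((h x)ᴴ * h x)))
        - (h x * b * (h x)ᴴ - (1/2:ℂ) • ((h x)ᴴ * h x * b + b * ((h x)ᴴ * h x))) := by
    intro x
    simp only [Matrix.mul_sub, Matrix.sub_mul, smul_sub, smul_add]
    abel
  simp only [lindblad, key, Finset.sum_sub_distrib]
  simp only [Matrix.mul_sub, Matrix.sub_mul, smul_sub]
  abel

lemma trace_lindblad (ρ : Matrix (Fin n) (Fin n) ℂ) : (lindblad H h ρ).trace = 0 := by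
  simp only [lindblad, trace_add, trace_smul, trace_sub, trace_sum]
  have h1 : (H * ρ).trace = (ρ * H).trace := trace_mul_comm H ρ
  have h2 : ∀ α, (h α * ρ * (h α)ᴴ).trace = ((h α)ᴴ * h α * ρ).trace := fun α =>
    trace_mul_cycle (h α) ρ (h α)ᴴ
  have h3 : ∀ α, (ρ * ((h α)ᴴ * h α)).trace = ((h α)ᴴ * h α * ρ).trace := fun α =>
    trace_mul_comm ρ ((h α)ᴴ * h α)
  simp only [h1, h2, h3, sub_self, smul_zero, smul_eq_mul, mul_zero, zero_add]
  exact Finset.sum_eq_zero fun α _ => by ring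

lemma lindblad_conjTranspose (hH : Hᴴ = H) (ρ : Matrix (Fin n) (Fin n) ℂ) :
    (lindblad H h ρ)ᴴ = lindblad H h ρᴴ := by
  simp only [lindblad, conjTranspose_add, conjTranspose_smul, conjTranspose_sub,
    conjTranspose_mul, conjTranspose_conjTranspose, conjTranspose_sum, hH]
  congr 1
  · rw [show star (-Complex.I) = Complex.I by simp,
      ← neg_sub (H * ρᴴ) (ρᴴ * H), smul_neg, neg_smul]
  · refine Finset.sum_congr rfl fun α _ => ?_
    rw [show star ((1:ℂ)/2) = (1:ℂ)/2 by norm_num]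
    rw [add_comm (ρᴴ * ((h α)ᴴ * h α)) ((h α)ᴴ * h α * ρᴴ)]
    simp only [Matrix.mul_assoc]


lemma trace_mul_lindblad (ρ R : Matrix (Fin n) (Fin n) ℂ)
    (hRH : Rᴴ = R) (hRR : R * R = R) (hρR : ρ * R = 0) (hRρ : R * ρ = 0) :
    (R * lindblad H h ρ).trace = ∑ α, ((R * h α) * ρ * (R * h α)ᴴ).trace := by
  have hc1 : (R * (H * ρ)).trace = 0 := by
    rw [trace_mul_comm, Matrix.mul_assoc, hρR, Matrix.mul_zero, trace_zero]
  have hc2 : (R * (ρ * H)).trace = 0 := by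
    rw [← Matrix.mul_assoc, hRρ, Matrix.zero_mul, trace_zero]
  have hc3 : ∀ α, (R * ((h α)ᴴ * h α * ρ)).trace = 0 := by
    intro α
    rw [trace_mul_comm]
    rw [Matrix.mul_assoc ((h α)ᴴ * h α) ρ R, hρR, Matrix.mul_zero, trace_zero]
  have hc4 : ∀ α, (R * (ρ * ((h α)ᴴ * h α))).trace = 0 := by
    intro α
    rw [← Matrix.mul_assoc, hRρ, Matrix.zero_mul, trace_zero]
  have hc5 : ∀ α, (R * (h α * ρ * (h α)ᴴ)).trace = ((R * h α) * ρ * (R * h α)ᴴ).trace := by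
    intro α
    rw [Matrix.conjTranspose_mul, hRH]
    calc (R * (h α * ρ * (h α)ᴴ)).trace
        = ((R * R) * (h α * ρ * (h α)ᴴ)).trace := by rw [hRR]
      _ = (R * h α * ρ * ((h α)ᴴ * R)).trace := by
          rw [trace_mul_comm]
          rw [trace_mul_comm (R * h α * ρ) ((h α)ᴴ * R)]
          simp only [Matrix.mul_assoc]
          rw [← Matrix.mul_assoc (h α) ρ, trace_mul_comm]
          simp only [Matrix.mul_assoc]
  simp only [lindblad, Matrix.mul_add, Matrix.mul_sub, Matrix.mul_smul, Finset.mul_sum,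
    trace_add, trace_smul, trace_sub, trace_sum, hc1, hc2, hc3, hc4, hc5, smul_eq_mul,
    sub_zero, zero_sub, mul_zero, add_zero, zero_add, sub_self, smul_zero, neg_zero]

lemma mul_lindblad_eq (ρ R K : Matrix (Fin n) (Fin n) ℂ)
    (hRρ : R * ρ = 0) (hRh : ∀ α, R * h α * ρ = 0)
    (hhρ : ∀ α, h α * ρ = K * (h α * ρ)) :
    R * lindblad H h ρ = -Complex.I • (R * (H * ρ)) +
      ∑ α, -((1/2:ℂ) • ((R * (h α)ᴴ * K) * (h α * ρ))) := by
  have t1 : ∀ α, R * (h α * ρ * (h α)ᴴ) = 0 := by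
    intro α
    simp only [← Matrix.mul_assoc]
    rw [hRh α, Matrix.zero_mul]
  have t2 : ∀ α, R * (ρ * ((h α)ᴴ * h α)) = 0 := by
    intro α
    rw [← Matrix.mul_assoc, hRρ, Matrix.zero_mul]
  have t3 : ∀ α, R * ((h α)ᴴ * h α * ρ) = (R * (h α)ᴴ * K) * (h α * ρ) := by
    intro α
    calc R * ((h α)ᴴ * h α * ρ) = R * (h α)ᴴ * (h α * ρ) := by
          simp only [Matrix.mul_assoc]
      _ = R * (h α)ᴴ * (K * (h α * ρ)) := by rw [← hhρ α]
      _ = (R * (h α)ᴴ * K) * (h α * ρ) := by simp only [Matrix.mul_assoc]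
  have t4 : R * (ρ * H) = 0 := by rw [← Matrix.mul_assoc, hRρ, Matrix.zero_mul]
  simp only [lindblad, Matrix.mul_add, Matrix.mul_sub, Matrix.mul_smul, Finset.mul_sum,
    t1, t2, t3, t4, smul_add, sub_zero, zero_sub, smul_zero, add_zero, zero_add]


lemma key_vanish (ρp ρm X : Matrix (Fin n) (Fin n) ℂ)
    (hρp : ρp.PosSemidef) (hρm : ρm.PosSemidef)
    (hXp : lindblad H h ρp = X) (hXm : lindblad H h ρm = X)
    (R : Matrix (Fin n) (Fin n) ℂ) (hRH : Rᴴ = R) (hRR : R * R = R)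
    (hRp : R * ρp = 0) (hpR : ρp * R = 0)
    (hRm : (1 - R) * ρm = 0) (hmR : ρm * (1 - R) = 0) :
    ∀ α, R * h α * ρp = 0 ∧ (1 - R) * h α * ρm = 0 := by
  have hR1H : (1 - R)ᴴ = 1 - R := by
    rw [conjTranspose_sub, conjTranspose_one, hRH]
  have hR1R : (1 - R) * (1 - R) = 1 - R := by
    simp only [Matrix.mul_sub, Matrix.sub_mul, Matrix.one_mul, Matrix.mul_one, hRR]
    abel
  have tp := trace_mul_lindblad H h ρp R hRH hRR hpR hRp
  have tm := trace_mul_lindblad H h ρm (1 - R) hR1H hR1R hmR hRm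
  rw [hXp] at tp
  rw [hXm] at tm
  have hsplit : (R * X).trace + ((1 - R) * X).trace = 0 := by
    have h1 : R * X + (1 - R) * X = X := by
      rw [← Matrix.add_mul]
      simp
    rw [← trace_add, h1, ← hXp, trace_lindblad]
  have np : ∀ α, 0 ≤ ((R * h α) * ρp * (R * h α)ᴴ).trace := fun α =>
    psd_trace_nonneg (hρp.mul_mul_conjTranspose_same _)
  have nm : ∀ α, 0 ≤ (((1 - R) * h α) * ρm * ((1 - R) * h α)ᴴ).trace := fun α =>
    psd_trace_nonneg (hρm.mul_mul_conjTranspose_same _)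
  have sp : 0 ≤ (R * X).trace := by
    rw [tp]; exact Finset.sum_nonneg fun α _ => np α
  have sm : 0 ≤ ((1 - R) * X).trace := by
    rw [tm]; exact Finset.sum_nonneg fun α _ => nm α
  have hp0 : (R * X).trace = 0 := by
    refine le_antisymm ?_ sp
    rw [eq_neg_of_add_eq_zero_left hsplit]
    exact neg_nonpos.mpr sm
  have hm0 : ((1 - R) * X).trace = 0 := by
    refine le_antisymm ?_ sm
    rw [eq_neg_of_add_eq_zero_right hsplit]
    exact neg_nonpos.mpr sp
  have hsum_p : ∑ α, ((R * h α) * ρp * (R * h α)ᴴ).trace = 0 := by rw [← tp]; exact hp0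
  have hsum_m : ∑ α, (((1 - R) * h α) * ρm * ((1 - R) * h α)ᴴ).trace = 0 := by
    rw [← tm]; exact hm0
  intro α
  constructor
  · have hz : (R * h α) * ρp * (R * h α)ᴴ = 0 :=
      psd_eq_zero_of_trace (hρp.mul_mul_conjTranspose_same _)
        ((Finset.sum_eq_zero_iff_of_nonneg (fun β _ => np β)).mp hsum_p α (Finset.mem_univ α))
    exact conj_cancel hρp hz
  · have hz : ((1 - R) * h α) * ρm * ((1 - R) * h α)ᴴ = 0 :=
      psd_eq_zero_of_trace (hρm.mul_mul_conjTranspose_same _)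
        ((Finset.sum_eq_zero_iff_of_nonneg (fun β _ => nm β)).mp hsum_m α (Finset.mem_univ α))
    exact conj_cancel hρm hz

end Stmt11Aux

/-- If a self-adjoint but not positive semidefinite stationary eigenmatrix `σ` has Jordan
decomposition `σ = ρ₊ - ρ₋`, then both parts are separately stationary. -/
theorem stmt11 {n : ℕ} {ι : Type*} [Fintype ι]
    (H : Matrix (Fin n) (Fin n) ℂ) (hH : H.IsHermitian)
    (h : ι → Matrix (Fin n) (Fin n) ℂ)
    (σ : Matrix (Fin n) (Fin n) ℂ) (hσ : σ.IsHermitian) (hσn : ¬ σ.PosSemidef)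
    (hstat : lindblad H h σ = 0)
    (ρp ρm : Matrix (Fin n) (Fin n) ℂ) (hρp : ρp.PosSemidef) (hρm : ρm.PosSemidef)
    (hdec : σ = ρp - ρm) (horth : ρp * ρm = 0) (horth' : ρm * ρp = 0) :
    lindblad H h ρp = 0 ∧ lindblad H h ρm = 0 := by
  classical
  obtain ⟨P, hPH, hPP, hPm, hPann⟩ := Stmt11Aux.exists_suppProj hρm.1
  obtain ⟨Q, hQH, hQQ, hQp, hQann⟩ := Stmt11Aux.exists_suppProj hρp.1
  have hp1 : ρpᴴ = ρp := hρp.1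
  have hm1 : ρmᴴ = ρm := hρm.1
  have hmP : ρm * P = ρm := by
    have := congrArg conjTranspose hPm
    rwa [conjTranspose_mul, hPH, hm1] at this
  have hpQ : ρp * Q = ρp := by
    have := congrArg conjTranspose hQp
    rwa [conjTranspose_mul, hQH, hp1] at this
  have hpP : ρp * P = 0 := hPann _ horth
  have hPp : P * ρp = 0 := by
    have := congrArg conjTranspose hpP
    rwa [conjTranspose_mul, hPH, hp1, conjTranspose_zero] at this
  have hmQ : ρm * Q = 0 := hQann _ horth'
  have hQm : Q * ρm = 0 := by
    have := congrArg conjTranspose hmQ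
    rwa [conjTranspose_mul, hQH, hm1, conjTranspose_zero] at this
  set X := lindblad H h ρp with hXdef
  clear_value X
  have hXp : lindblad H h ρp = X := hXdef.symm
  have hXm : lindblad H h ρm = X := by
    have h1 : lindblad H h σ = lindblad H h ρp - lindblad H h ρm := by
      rw [hdec, Stmt11Aux.lindblad_sub]
    rw [hstat] at h1
    rw [hXdef]
    exact (sub_eq_zero.mp h1.symm).symm
  have hXherm : Xᴴ = X := by
    rw [hXdef, Stmt11Aux.lindblad_conjTranspose H h hH, hp1]
  have k1 := Stmt11Aux.key_vanish H h ρp ρm X hρp hρm hXp hXm P hPH hPP hPp hpP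
      (by rw [Matrix.sub_mul, Matrix.one_mul, hPm, sub_self])
      (by rw [Matrix.mul_sub, Matrix.mul_one, hmP, sub_self])
  have k2 := Stmt11Aux.key_vanish H h ρp ρm X hρp hρm hXp hXm (1 - Q)
      (by rw [conjTranspose_sub, conjTranspose_one, hQH])
      (by simp only [Matrix.mul_sub, Matrix.sub_mul, Matrix.one_mul, Matrix.mul_one, hQQ]; abel)
      (by rw [Matrix.sub_mul, Matrix.one_mul, hQp, sub_self])
      (by rw [Matrix.mul_sub, Matrix.mul_one, hpQ, sub_self])
      (by rw [sub_sub_cancel]; exact hQm)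
      (by rw [sub_sub_cancel]; exact hmQ)
  have e1 : ∀ α, P * h α * ρp = 0 := fun α => (k1 α).1
  have e2 : ∀ α, (1 - P) * h α * ρm = 0 := fun α => (k1 α).2
  have e3 : ∀ α, (1 - Q) * h α * ρp = 0 := fun α => (k2 α).1
  have e4 : ∀ α, Q * h α * ρm = 0 := by
    intro α
    have := (k2 α).2
    rwa [sub_sub_cancel] at this
  have s1 : ∀ α, Q * h α * P = 0 := fun α => hPann _ (e4 α)
  have s2 : ∀ α, P * h α * Q = 0 := fun α => hQann _ (e1 α)
  have s1' : ∀ α, P * (h α)ᴴ * Q = 0 := by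
    intro α
    have := congrArg conjTranspose (s1 α)
    rwa [conjTranspose_mul, conjTranspose_mul, hPH, hQH, conjTranspose_zero,
      ← Matrix.mul_assoc] at this
  have s2' : ∀ α, Q * (h α)ᴴ * P = 0 := by
    intro α
    have := congrArg conjTranspose (s2 α)
    rwa [conjTranspose_mul, conjTranspose_mul, hPH, hQH, conjTranspose_zero,
      ← Matrix.mul_assoc] at this
  have eQ : ∀ α, h α * ρp = Q * (h α * ρp) := by
    intro α
    have := e3 α
    rw [Matrix.sub_mul, Matrix.sub_mul, Matrix.one_mul, sub_eq_zero] at this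
    rwa [Matrix.mul_assoc] at this
  have eP : ∀ α, h α * ρm = P * (h α * ρm) := by
    intro α
    have := e2 α
    rw [Matrix.sub_mul, Matrix.sub_mul, Matrix.one_mul, sub_eq_zero] at this
    rwa [Matrix.mul_assoc] at this
  have hPX : P * X = -Complex.I • (P * (H * ρp)) := by
    have h0 := Stmt11Aux.mul_lindblad_eq H h ρp P Q hPp e1 eQ
    rw [hXp] at h0
    rw [h0]
    simp [s1']
  have hQX : Q * X = -Complex.I • (Q * (H * ρm)) := by
    have h0 := Stmt11Aux.mul_lindblad_eq H h ρm Q P hQm e4 eP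
    rw [hXm] at h0
    rw [h0]
    simp [s2']
  have hXQ : X * Q = Complex.I • (ρm * H * Q) := by
    have := congrArg conjTranspose hQX
    rw [conjTranspose_mul, hXherm, hQH] at this
    rw [conjTranspose_smul, conjTranspose_mul, conjTranspose_mul, hQH, hm1, hH] at this
    rwa [show star (-Complex.I) = Complex.I from by simp] at this
  have hrel : -Complex.I • (P * (H * ρp)) = Complex.I • (ρm * H * Q) := by
    calc -Complex.I • (P * (H * ρp)) = P * X := hPX.symm
      _ = P * X * Q := by
          rw [hPX, Matrix.smul_mul]
          congr 1
          rw [Matrix.mul_assoc P (H * ρp) Q, Matrix.mul_assoc H ρp Q, hpQ]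
      _ = P * (X * Q) := by rw [Matrix.mul_assoc]
      _ = Complex.I • (ρm * H * Q) := by
          rw [hXQ, Matrix.mul_smul]
          congr 1
          simp only [← Matrix.mul_assoc]
          rw [hPm]
  set A := P * H * Q with hAdef
  clear_value A
  have hA1 : A * ρp = P * (H * ρp) := by
    rw [hAdef, Matrix.mul_assoc (P * H) Q ρp, hQp, Matrix.mul_assoc]
  have hA2 : ρm * A = ρm * H * Q := by
    rw [hAdef]
    simp only [← Matrix.mul_assoc]
    rw [hmP]
  have hArel : A * ρp = -(ρm * A) := by
    have h3 : -Complex.I • (A * ρp) = Complex.I • (ρm * A) := by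
      rw [hA1, hA2]; exact hrel
    have h4 := congrArg (fun M => Complex.I • M) h3
    simp only [smul_smul] at h4
    rw [show Complex.I * -Complex.I = 1 from by rw [mul_neg, Complex.I_mul_I, neg_neg],
      Complex.I_mul_I] at h4
    rwa [one_smul, neg_one_smul] at h4
  have hAρ0 : A * ρp = 0 := by
    obtain ⟨S, hSH, hS⟩ : ∃ S : Matrix (Fin n) (Fin n) ℂ, Sᴴ = S ∧ S * S = ρp :=
      ⟨hρp.sqrt, hρp.posSemidef_sqrt.1, hρp.sqrt_mul_self⟩
    have hB : ((A * S)ᴴ * ρm * (A * S)).PosSemidef := hρm.conjTranspose_mul_mul_same _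
    have hnn : 0 ≤ ((A * S)ᴴ * ρm * (A * S)).trace := Stmt11Aux.psd_trace_nonneg hB
    have htr : ((A * ρp)ᴴ * (A * ρp)).trace = -(((A * S)ᴴ * ρm * (A * S)).trace) := by
      calc ((A * ρp)ᴴ * (A * ρp)).trace
          = ((ρp * Aᴴ) * (-(ρm * A))).trace := by rw [conjTranspose_mul, hp1, hArel]
        _ = -(((ρp * Aᴴ) * (ρm * A)).trace) := by rw [Matrix.mul_neg, trace_neg]
        _ = -(((A * S)ᴴ * ρm * (A * S)).trace) := by
            congr 1
            rw [show (A * S)ᴴ = S * Aᴴ from by rw [conjTranspose_mul, hSH]]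
            calc ((ρp * Aᴴ) * (ρm * A)).trace
                = (S * (S * Aᴴ * ρm * A)).trace := by
                  rw [← hS]; simp only [Matrix.mul_assoc]
              _ = ((S * Aᴴ * ρm * A) * S).trace := trace_mul_comm _ _
              _ = ((S * Aᴴ) * ρm * (A * S)).trace := by
                  simp only [Matrix.mul_assoc]
    have hge : 0 ≤ ((A * ρp)ᴴ * (A * ρp)).trace := Stmt11Aux.trace_ct_nonneg _
    have hz : ((A * ρp)ᴴ * (A * ρp)).trace = 0 :=
      le_antisymm (by rw [htr]; exact neg_nonpos.mpr hnn) hge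
    exact Stmt11Aux.eq_zero_of_trace_ct _ hz
  have hmA0 : ρm * A = 0 := by
    have := hArel
    rw [hAρ0] at this
    exact neg_eq_zero.mp this.symm
  have hPX0 : P * X = 0 := by
    rw [hPX, ← hA1, hAρ0, smul_zero]
  have hXP0 : X * P = 0 := by
    have := congrArg conjTranspose hPX0
    rwa [conjTranspose_mul, hXherm, hPH, conjTranspose_zero] at this
  have hQX0 : Q * X = 0 := by
    rw [hQX]
    have hA3 : Aᴴ * ρm = Q * (H * ρm) := by
      calc Aᴴ * ρm = Qᴴ * (P * H)ᴴ * ρm := by rw [hAdef, conjTranspose_mul]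
        _ = Q * (Hᴴ * Pᴴ) * ρm := by rw [hQH, conjTranspose_mul]
        _ = Q * (H * P) * ρm := by rw [hH, hPH]
        _ = Q * (H * (P * ρm)) := by simp only [Matrix.mul_assoc]
        _ = Q * (H * ρm) := by rw [hPm]
    have hA3z : Aᴴ * ρm = 0 := by
      have := congrArg conjTranspose hmA0
      rwa [conjTranspose_mul, hm1, conjTranspose_zero] at this
    rw [← hA3, hA3z, smul_zero]
  set Rr := 1 - P - Q with hRdef
  clear_value Rr
  have hRm0 : Rr * ρm = 0 := by
    rw [hRdef, Matrix.sub_mul, Matrix.sub_mul, Matrix.one_mul, hPm, hQm]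
    simp
  have hRh : ∀ α, Rr * h α * ρm = 0 := by
    intro α
    rw [hRdef, Matrix.sub_mul, Matrix.sub_mul]
    rw [e2 α, e4 α]
    simp
  have hRX : Rr * X = 0 := by
    have h0 := Stmt11Aux.mul_lindblad_eq H h ρm Rr P hRm0 hRh eP
    rw [hXm] at h0
    have h1 : Rr * X * P = Rr * X := by
      rw [h0]
      rw [Matrix.add_mul, Matrix.smul_mul, Finset.sum_mul]
      congr 1
      · congr 1
        rw [Matrix.mul_assoc Rr (H * ρm) P, Matrix.mul_assoc H ρm P, hmP]
      · refine Finset.sum_congr rfl fun α _ => ?_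
        rw [Matrix.neg_mul, Matrix.smul_mul]
        congr 2
        rw [Matrix.mul_assoc (Rr * (h α)ᴴ * P) (h α * ρm) P, Matrix.mul_assoc (h α) ρm P, hmP]
    rw [← h1, Matrix.mul_assoc, hXP0, Matrix.mul_zero]
  have hX0 : X = 0 := by
    have hsum : P + Q + Rr = 1 := by rw [hRdef]; abel
    calc X = (P + Q + Rr) * X := by rw [hsum, Matrix.one_mul]
      _ = P * X + Q * X + Rr * X := by rw [Matrix.add_mul, Matrix.add_mul]
      _ = 0 := by rw [hPX0, hQX0, hRX]; simp
  exact ⟨hX0, hXm.trans hX0⟩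
end

section
/- If P commutes with H and with every h_α, then for all matrices ρ and all t ≥ 0 one has T^t(P ρ Q) = P T^t(ρ) Q whenever Q also commutes with H and all h_α; in particular the evolutions of the blocks P_i ρ P_j for commuting projectors P_i, P_j are mutually independent. -/
open Matrix
open scoped Matrix.Norms.L2Operator ComplexOrder

noncomputable def lindbladL {n : ℕ} {ι : Type*} [Fintype ι]
    (H : Matrix (Fin n) (Fin n) ℂ) (h : ι → Matrix (Fin n) (Fin n) ℂ) :
    Matrix (Fin n) (Fin n) ℂ →ₗ[ℂ] Matrix (Fin n) (Fin n) ℂ :=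
  (-Complex.I) • (LinearMap.mulLeft ℂ H - LinearMap.mulRight ℂ H) +
  ∑ α, ((LinearMap.mulRight ℂ (h α)ᴴ).comp (LinearMap.mulLeft ℂ (h α)) -
        (1/2 : ℂ) • (LinearMap.mulLeft ℂ ((h α)ᴴ * h α) + LinearMap.mulRight ℂ ((h α)ᴴ * h α)))

lemma lindbladL_apply {n : ℕ} {ι : Type*} [Fintype ι]
    (H : Matrix (Fin n) (Fin n) ℂ) (h : ι → Matrix (Fin n) (Fin n) ℂ)
    (ρ : Matrix (Fin n) (Fin n) ℂ) : lindbladL H h ρ = lindblad H h ρ := by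
  simp [lindbladL, lindblad, LinearMap.sum_apply, LinearMap.mulLeft_apply,
    LinearMap.mulRight_apply, mul_assoc]

noncomputable def lindbladCLM {n : ℕ} {ι : Type*} [Fintype ι]
    (H : Matrix (Fin n) (Fin n) ℂ) (h : ι → Matrix (Fin n) (Fin n) ℂ) :
    Matrix (Fin n) (Fin n) ℂ →L[ℂ] Matrix (Fin n) (Fin n) ℂ :=
  LinearMap.toContinuousLinearMap (lindbladL H h)

lemma lindblad_block {n : ℕ} {ι : Type*} [Fintype ι]
    (H : Matrix (Fin n) (Fin n) ℂ) (h : ι → Matrix (Fin n) (Fin n) ℂ)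
    (P Q : Matrix (Fin n) (Fin n) ℂ)
    (hPh : Pᴴ = P) (hQh : Qᴴ = Q)
    (hPH : P * H = H * P) (hPhα : ∀ α, P * h α = h α * P)
    (hQH : Q * H = H * Q) (hQhα : ∀ α, Q * h α = h α * Q)
    (ρ : Matrix (Fin n) (Fin n) ℂ) :
    lindblad H h (P * ρ * Q) = P * lindblad H h ρ * Q := by
  have hPhα' : ∀ α, P * (h α)ᴴ = (h α)ᴴ * P := by
    intro α
    have := congrArg conjTranspose (hPhα α)
    simpa [conjTranspose_mul, hPh] using this.symm
  have hQhα' : ∀ α, Q * (h α)ᴴ = (h α)ᴴ * Q := by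
    intro α
    have := congrArg conjTranspose (hQhα α)
    simpa [conjTranspose_mul, hQh] using this.symm
  have l1 : ∀ x, H * (P * x) = P * (H * x) := fun x => by
    rw [← mul_assoc, ← hPH, mul_assoc]
  have l2 : ∀ α x, h α * (P * x) = P * (h α * x) := fun α x => by
    rw [← mul_assoc, ← hPhα, mul_assoc]
  have l3 : ∀ α x, (h α)ᴴ * (P * x) = P * ((h α)ᴴ * x) := fun α x => by
    rw [← mul_assoc, ← hPhα', mul_assoc]
  have r1 : ∀ x, Q * (H * x) = H * (Q * x) := fun x => by
    rw [← mul_assoc, hQH, mul_assoc]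
  have r2 : ∀ α x, Q * (h α * x) = h α * (Q * x) := fun α x => by
    rw [← mul_assoc, hQhα, mul_assoc]
  have r3 : ∀ α x, Q * ((h α)ᴴ * x) = (h α)ᴴ * (Q * x) := fun α x => by
    rw [← mul_assoc, hQhα', mul_assoc]
  simp only [lindblad, mul_add, add_mul, mul_sub, sub_mul, Finset.mul_sum,
    Finset.sum_mul, mul_smul_comm, smul_mul_assoc, mul_assoc]
  simp only [l1, l2, l3, r1, r2, r3, hQH, hQhα, hQhα']

/-- If the orthogonal projectors `P` and `Q` both commute with `H` and with every `h α`,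
then `T^t (P ρ Q) = P (T^t ρ) Q` for all `ρ` and all `t ≥ 0`: the blocks evolve
independently. -/
theorem stmt13 {n : ℕ} {ι : Type*} [Fintype ι]
    (H : Matrix (Fin n) (Fin n) ℂ) (hH : H.IsHermitian)
    (h : ι → Matrix (Fin n) (Fin n) ℂ)
    (T : ℝ → Matrix (Fin n) (Fin n) ℂ →ₗ[ℂ] Matrix (Fin n) (Fin n) ℂ)
    (hT0 : T 0 = LinearMap.id)
    (hTderiv : ∀ (ρ : Matrix (Fin n) (Fin n) ℂ) (t : ℝ),
      HasDerivAt (fun s => T s ρ) (lindblad H h (T t ρ)) t)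
    (P Q : Matrix (Fin n) (Fin n) ℂ)
    (hP : P * P = P) (hPh : Pᴴ = P) (hQ : Q * Q = Q) (hQh : Qᴴ = Q)
    (hPH : P * H = H * P) (hPhα : ∀ α, P * h α = h α * P)
    (hQH : Q * H = H * Q) (hQhα : ∀ α, Q * h α = h α * Q) :
    ∀ (ρ : Matrix (Fin n) (Fin n) ℂ) (t : ℝ), 0 ≤ t →
      T t (P * ρ * Q) = P * T t ρ * Q := by
  intro ρ t ht
  set f : ℝ → Matrix (Fin n) (Fin n) ℂ := fun s => T s (P * ρ * Q) with hf
  set g : ℝ → Matrix (Fin n) (Fin n) ℂ := fun s => P * T s ρ * Q with hg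
  have hf' : ∀ s, HasDerivAt f (lindbladCLM H h (f s)) s := by
    intro s
    have := hTderiv (P * ρ * Q) s
    simpa [lindbladCLM, lindbladL_apply] using this
  have hg' : ∀ s, HasDerivAt g (lindbladCLM H h (g s)) s := by
    intro s
    have := ((hTderiv ρ s).const_mul P).mul_const Q
    have h2 : P * lindblad H h (T s ρ) * Q = lindblad H h (P * T s ρ * Q) :=
      (lindblad_block H h P Q hPh hQh hPH hPhα hQH hQhα (T s ρ)).symm
    simpa [lindbladCLM, lindbladL_apply, hg, h2] using this
  have key : Set.EqOn f g (Set.Icc 0 t) := by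
    apply ODE_solution_unique (v := fun _ x => lindbladCLM H h x)
      (K := ‖lindbladCLM H h‖₊)
    · intro s
      exact (lindbladCLM H h).lipschitz
    · exact fun s _ => ((hf' s).differentiableAt.continuousAt).continuousWithinAt
    · exact fun s _ => (hf' s).hasDerivWithinAt
    · exact fun s _ => ((hg' s).differentiableAt.continuousAt).continuousWithinAt
    · exact fun s _ => (hg' s).hasDerivWithinAt
    · simp [hf, hg, hT0]
  exact key ⟨ht, le_refl t⟩
end

section
/- Let P_i, P_j project onto two minimal enclosures of a Lindblad generator with unique full-rank stationary states ρ_i, ρ_j. If there exists a unitary U commuting with H and all h_α with U P_j = P_i U, then U ρ_j U† = ρ_i and the off-diagonal block U ρ_j is a stationary eigenmatrix: D(U ρ_j) = 0. -/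
open Matrix
open scoped Matrix.Norms.L2Operator ComplexOrder

lemma lindblad_left_comm {n : ℕ} {ι : Type*} [Fintype ι]
    (H : Matrix (Fin n) (Fin n) ℂ) (h : ι → Matrix (Fin n) (Fin n) ℂ)
    (U : Matrix (Fin n) (Fin n) ℂ)
    (hUH : U * H = H * U) (hUhα : ∀ α, U * h α = h α * U)
    (hUhαc : ∀ α, U * (h α)ᴴ = (h α)ᴴ * U)
    (ρ : Matrix (Fin n) (Fin n) ℂ) :
    lindblad H h (U * ρ) = U * lindblad H h ρ := by
  have c1 : H * (U * ρ) = U * (H * ρ) := by rw [← mul_assoc, ← hUH, mul_assoc]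
  have c2 : ∀ α, h α * (U * ρ) * (h α)ᴴ = U * (h α * ρ * (h α)ᴴ) := by
    intro α
    calc h α * (U * ρ) * (h α)ᴴ = (h α * U) * (ρ * (h α)ᴴ) := by
          simp only [mul_assoc]
      _ = (U * h α) * (ρ * (h α)ᴴ) := by rw [hUhα]
      _ = U * (h α * ρ * (h α)ᴴ) := by simp only [mul_assoc]
  have c3 : ∀ α, (h α)ᴴ * h α * (U * ρ) = U * ((h α)ᴴ * h α * ρ) := by
    intro α
    calc (h α)ᴴ * h α * (U * ρ) = (h α)ᴴ * ((h α * U) * ρ) := by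
          simp only [mul_assoc]
      _ = (h α)ᴴ * ((U * h α) * ρ) := by rw [hUhα]
      _ = ((h α)ᴴ * U) * (h α * ρ) := by simp only [mul_assoc]
      _ = (U * (h α)ᴴ) * (h α * ρ) := by rw [hUhαc]
      _ = U * ((h α)ᴴ * h α * ρ) := by simp only [mul_assoc]
  have c4 : (U * ρ) * H = U * (ρ * H) := mul_assoc _ _ _
  have c5 : ∀ α, (U * ρ) * ((h α)ᴴ * h α) = U * (ρ * ((h α)ᴴ * h α)) :=
    fun α => mul_assoc _ _ _
  simp only [lindblad, Matrix.mul_add, Matrix.mul_sub, Matrix.mul_sum, Matrix.mul_smul,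
    c1, c2, c3, c4, c5]

lemma lindblad_right_comm {n : ℕ} {ι : Type*} [Fintype ι]
    (H : Matrix (Fin n) (Fin n) ℂ) (h : ι → Matrix (Fin n) (Fin n) ℂ)
    (V : Matrix (Fin n) (Fin n) ℂ)
    (hVH : V * H = H * V) (hVhα : ∀ α, V * h α = h α * V)
    (hVhαc : ∀ α, V * (h α)ᴴ = (h α)ᴴ * V)
    (ρ : Matrix (Fin n) (Fin n) ℂ) :
    lindblad H h (ρ * V) = lindblad H h ρ * V := by
  have c1 : H * (ρ * V) = (H * ρ) * V := (mul_assoc _ _ _).symm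
  have c2 : (ρ * V) * H = (ρ * H) * V := by rw [mul_assoc, hVH, ← mul_assoc]
  have c3 : ∀ α, h α * (ρ * V) * (h α)ᴴ = (h α * ρ * (h α)ᴴ) * V := by
    intro α
    calc h α * (ρ * V) * (h α)ᴴ = h α * (ρ * (V * (h α)ᴴ)) := by
          simp only [mul_assoc]
      _ = h α * (ρ * ((h α)ᴴ * V)) := by rw [hVhαc]
      _ = (h α * ρ * (h α)ᴴ) * V := by simp only [mul_assoc]
  have c4 : ∀ α, (h α)ᴴ * h α * (ρ * V) = ((h α)ᴴ * h α * ρ) * V := by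
    intro α; simp only [mul_assoc]
  have c5 : ∀ α, (ρ * V) * ((h α)ᴴ * h α) = (ρ * ((h α)ᴴ * h α)) * V := by
    intro α
    calc (ρ * V) * ((h α)ᴴ * h α) = ρ * ((V * (h α)ᴴ) * h α) := by
          simp only [mul_assoc]
      _ = ρ * (((h α)ᴴ * V) * h α) := by rw [hVhαc]
      _ = ρ * ((h α)ᴴ * (V * h α)) := by simp only [mul_assoc]
      _ = ρ * ((h α)ᴴ * (h α * V)) := by rw [hVhα]
      _ = (ρ * ((h α)ᴴ * h α)) * V := by simp only [mul_assoc]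
  simp only [lindblad, Matrix.add_mul, Matrix.sub_mul, Matrix.sum_mul, Matrix.smul_mul,
    c1, c2, c3, c4, c5]

/-- If a unitary `U` commuting with `H` and all `h α` intertwines two minimal enclosures
(`U P_j = P_i U`), then it maps the unique stationary state `ρ_j` to `ρ_i`, and the
off-diagonal block `U ρ_j` is a stationary eigenmatrix of the Lindblad generator. -/
theorem stmt15 {n : ℕ} {ι : Type*} [Fintype ι]
    (H : Matrix (Fin n) (Fin n) ℂ) (hH : H.IsHermitian)
    (h : ι → Matrix (Fin n) (Fin n) ℂ)
    (Pi Pj : Matrix (Fin n) (Fin n) ℂ)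
    (hPi : Pi * Pi = Pi) (hPih : Piᴴ = Pi) (hPj : Pj * Pj = Pj) (hPjh : Pjᴴ = Pj)
    (horth : Pi * Pj = 0)
    (hPiH : Pi * H = H * Pi) (hPihα : ∀ α, Pi * h α = h α * Pi)
    (hPjH : Pj * H = H * Pj) (hPjhα : ∀ α, Pj * h α = h α * Pj)
    (ρi ρj : Matrix (Fin n) (Fin n) ℂ)
    (hρi : ρi.PosSemidef) (hρitr : ρi.trace = 1) (hρisupp : ρi = Pi * ρi * Pi)
    (hρistat : lindblad H h ρi = 0) (hρirank : ρi.rank = Pi.rank)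
    (hρiuniq : ∀ σ : Matrix (Fin n) (Fin n) ℂ, σ.PosSemidef → σ.trace = 1 →
      σ = Pi * σ * Pi → lindblad H h σ = 0 → σ = ρi)
    (hρj : ρj.PosSemidef) (hρjtr : ρj.trace = 1) (hρjsupp : ρj = Pj * ρj * Pj)
    (hρjstat : lindblad H h ρj = 0) (hρjrank : ρj.rank = Pj.rank)
    (hρjuniq : ∀ σ : Matrix (Fin n) (Fin n) ℂ, σ.PosSemidef → σ.trace = 1 →
      σ = Pj * σ * Pj → lindblad H h σ = 0 → σ = ρj)
    (U : Matrix (Fin n) (Fin n) ℂ) (hU : Uᴴ * U = 1) (hU' : U * Uᴴ = 1)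
    (hUH : U * H = H * U) (hUhα : ∀ α, U * h α = h α * U)
    (hint : U * Pj = Pi * U) :
    U * ρj * Uᴴ = ρi ∧ lindblad H h (U * ρj) = 0 := by
  -- U commutes with (h α)ᴴ
  have hUhαc : ∀ α, U * (h α)ᴴ = (h α)ᴴ * U := by
    intro α
    have := congrArg conjTranspose (hUhα α)
    simp only [Matrix.conjTranspose_mul] at this
    -- this : (h α)ᴴ * Uᴴ = Uᴴ * (h α)ᴴ
    calc U * (h α)ᴴ = U * (h α)ᴴ * (Uᴴ * U) := by rw [hU, mul_one]
      _ = U * ((h α)ᴴ * Uᴴ) * U := by rw [mul_assoc, mul_assoc, mul_assoc]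
      _ = U * (Uᴴ * (h α)ᴴ) * U := by rw [this]
      _ = (U * Uᴴ) * ((h α)ᴴ * U) := by rw [mul_assoc, mul_assoc, mul_assoc]
      _ = (h α)ᴴ * U := by rw [hU', one_mul]
  have hUHc : Uᴴ * H = H * Uᴴ := by
    have := congrArg conjTranspose hUH
    simp only [Matrix.conjTranspose_mul, hH.eq] at this
    exact this.symm
  have hUhαc2 : ∀ α, Uᴴ * h α = h α * Uᴴ := by
    intro α
    have := congrArg conjTranspose (hUhαc α)
    simp only [Matrix.conjTranspose_mul, Matrix.conjTranspose_conjTranspose] at this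
    exact this.symm
  have hUhαc3 : ∀ α, Uᴴ * (h α)ᴴ = (h α)ᴴ * Uᴴ := by
    intro α
    have := congrArg conjTranspose (hUhα α)
    simp only [Matrix.conjTranspose_mul] at this
    exact this.symm
  have hstatU : lindblad H h (U * ρj) = 0 := by
    rw [lindblad_left_comm H h U hUH hUhα hUhαc, hρjstat, mul_zero]
  refine ⟨?_, hstatU⟩
  apply hρiuniq
  · exact hρj.mul_mul_conjTranspose_same U
  · rw [Matrix.trace_mul_cycle, hU, one_mul, hρjtr]
  · -- support condition
    have hintc : Uᴴ * Pi = Pj * Uᴴ := by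
      have := congrArg conjTranspose hint
      simp only [Matrix.conjTranspose_mul, hPih, hPjh] at this
      exact this.symm
    calc U * ρj * Uᴴ = U * (Pj * ρj * Pj) * Uᴴ := by rw [← hρjsupp]
      _ = (U * Pj) * ρj * (Pj * Uᴴ) := by simp only [mul_assoc]
      _ = (Pi * U) * ρj * (Uᴴ * Pi) := by rw [hint, hintc]
      _ = Pi * (U * ρj * Uᴴ) * Pi := by simp only [mul_assoc]
  · rw [lindblad_right_comm H h Uᴴ hUHc hUhαc2 hUhαc3, lindblad_left_comm H h U hUH hUhα hUhαc,
      hρjstat, mul_zero, zero_mul]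
end

section
/- Let F be an operator with D†(F) = irF for a real number r, supported as F = P_ℓ F P_j between two minimal enclosures, and suppose V := F/‖F†F‖^{1/2} satisfies V†V = P_j and VV† = P_ℓ. Then taking the trace of V†D†(V) = irP_j and applying the Cauchy–Schwarz and AM–GM inequalities forces h_α V = V h_α for all α and HV = V(H + r). -/
open Matrix
open scoped Matrix.Norms.L2Operator ComplexOrder

/-- The Heisenberg-picture (adjoint) Lindblad generator. -/
noncomputable def lindbladDual {n : ℕ} {ι : Type*} [Fintype ι]
    (H : Matrix (Fin n) (Fin n) ℂ) (h : ι → Matrix (Fin n) (Fin n) ℂ)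
    (F : Matrix (Fin n) (Fin n) ℂ) : Matrix (Fin n) (Fin n) ℂ :=
  Complex.I • (H * F - F * H) +
    ∑ α, ((h α)ᴴ * F * h α - (1/2 : ℂ) • ((h α)ᴴ * h α * F + F * ((h α)ᴴ * h α)))

private lemma lindbladDual_smul' {n : ℕ} {ι : Type*} [Fintype ι]
    (H : Matrix (Fin n) (Fin n) ℂ) (h : ι → Matrix (Fin n) (Fin n) ℂ)
    (a : ℂ) (F : Matrix (Fin n) (Fin n) ℂ) :
    lindbladDual H h (a • F) = a • lindbladDual H h F := by
  simp only [lindbladDual, Matrix.mul_smul, Matrix.smul_mul, smul_add, smul_sub,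
    Finset.smul_sum, smul_smul]
  rw [mul_comm a Complex.I]
  congr 1
  refine Finset.sum_congr rfl fun α _ => ?_
  rw [mul_comm a (1/2 : ℂ)]

private lemma lindbladDual_conjT' {n : ℕ} {ι : Type*} [Fintype ι]
    {H : Matrix (Fin n) (Fin n) ℂ} (hH : Hᴴ = H) (h : ι → Matrix (Fin n) (Fin n) ℂ)
    (F : Matrix (Fin n) (Fin n) ℂ) :
    (lindbladDual H h F)ᴴ = lindbladDual H h Fᴴ := by
  simp only [lindbladDual, conjTranspose_add, conjTranspose_sub, conjTranspose_smul,
    conjTranspose_mul, conjTranspose_conjTranspose, conjTranspose_sum, hH,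
    Complex.star_def, Complex.conj_I, map_div₀, _root_.map_one, map_ofNat, mul_assoc]
  congr 1
  · rw [neg_smul, ← smul_neg, neg_sub]
  · exact Finset.sum_congr rfl fun α _ => by rw [add_comm]

private lemma ham_part' {n : ℕ} (H V : Matrix (Fin n) (Fin n) ℂ) :
    (Vᴴ * (Complex.I • (H * V - V * H))).trace
    + (Complex.I • (H * Vᴴ - Vᴴ * H) * V).trace = 0 := by
  have h1 : (Vᴴ * (V * H)).trace = (H * (Vᴴ * V)).trace := by
    rw [← mul_assoc, Matrix.trace_mul_comm]
  simp only [Matrix.mul_smul, Matrix.smul_mul, Matrix.mul_sub, Matrix.sub_mul,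
    Matrix.trace_smul, Matrix.trace_sub, smul_eq_mul, mul_assoc]
  linear_combination (-Complex.I) * h1

private lemma per_alpha' {n : ℕ} (V W : Matrix (Fin n) (Fin n) ℂ)
    (hP : Wᴴ * (Vᴴ * V) = Vᴴ * V * Wᴴ) :
    (Vᴴ * (Wᴴ * V * W - (1/2:ℂ) • (Wᴴ * W * V + V * (Wᴴ * W)))).trace
    + ((Wᴴ * Vᴴ * W - (1/2:ℂ) • (Wᴴ * W * Vᴴ + Vᴴ * (Wᴴ * W))) * V).trace
    + ((W * V - V * W)ᴴ * (W * V - V * W)).trace = 0 := by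
  have hp : (Wᴴ * (Vᴴ * (V * W))).trace = (Vᴴ * (V * (Wᴴ * W))).trace := by
    rw [show Wᴴ * (Vᴴ * (V * W)) = Vᴴ * (V * (Wᴴ * W)) from by
      simp only [← mul_assoc]; rw [mul_assoc Wᴴ Vᴴ V, hP]]
  have hq : (Wᴴ * (W * (Vᴴ * V))).trace = (Vᴴ * (V * (Wᴴ * W))).trace := by
    rw [← mul_assoc, ← mul_assoc Vᴴ V, Matrix.trace_mul_comm]
  simp only [Matrix.conjTranspose_sub, Matrix.conjTranspose_mul, Matrix.sub_mul, Matrix.mul_sub,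
    Matrix.add_mul, Matrix.mul_add, Matrix.smul_mul, Matrix.mul_smul, smul_add,
    Matrix.trace_add, Matrix.trace_sub, Matrix.trace_smul, smul_eq_mul, mul_assoc]
  linear_combination hp - (1/2 : ℂ) * hq

private lemma diag_sq' {n : ℕ} (A : Matrix (Fin n) (Fin n) ℂ) (i : Fin n) :
    (Aᴴ * A).diag i = star (fun j => A j i) ⬝ᵥ (fun j => A j i) := by
  simp [Matrix.diag, Matrix.mul_apply, dotProduct, Matrix.conjTranspose_apply]

private lemma trace_sq_nonneg' {n : ℕ} (A : Matrix (Fin n) (Fin n) ℂ) :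
    0 ≤ (Aᴴ * A).trace := by
  rw [Matrix.trace]
  refine Finset.sum_nonneg fun i _ => ?_
  rw [diag_sq']
  exact dotProduct_star_self_nonneg _

private lemma eq_zero_of_trace_sq' {n : ℕ} {A : Matrix (Fin n) (Fin n) ℂ}
    (hA : (Aᴴ * A).trace = 0) : A = 0 := by
  rw [Matrix.trace] at hA
  have h0 := (Finset.sum_eq_zero_iff_of_nonneg (fun i _ => by
    rw [diag_sq']; exact dotProduct_star_self_nonneg _)).mp hA
  ext i j
  have hj := h0 j (Finset.mem_univ j)
  rw [diag_sq'] at hj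
  exact congrFun (dotProduct_star_self_eq_zero.mp hj) i

private lemma core' {n : ℕ} {ι : Type*} [Fintype ι]
    {H : Matrix (Fin n) (Fin n) ℂ} (hH : Hᴴ = H) (h : ι → Matrix (Fin n) (Fin n) ℂ)
    (V : Matrix (Fin n) (Fin n) ℂ) (c : ℂ) (hc : star c = -c)
    (hP : ∀ α, (h α)ᴴ * (Vᴴ * V) = Vᴴ * V * (h α)ᴴ)
    (hDV : lindbladDual H h V = c • V) (α : ι) :
    h α * V = V * h α := by
  have e1 : (Vᴴ * lindbladDual H h V).trace
      = (Vᴴ * (Complex.I • (H * V - V * H))).trace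
        + ∑ β, (Vᴴ * ((h β)ᴴ * V * h β
            - (1/2:ℂ) • ((h β)ᴴ * h β * V + V * ((h β)ᴴ * h β)))).trace := by
    rw [lindbladDual, Matrix.mul_add, Matrix.mul_sum, Matrix.trace_add, Matrix.trace_sum]
  have e2 : (lindbladDual H h Vᴴ * V).trace
      = (Complex.I • (H * Vᴴ - Vᴴ * H) * V).trace
        + ∑ β, (((h β)ᴴ * Vᴴ * h β
            - (1/2:ℂ) • ((h β)ᴴ * h β * Vᴴ + Vᴴ * ((h β)ᴴ * h β))) * V).trace := by
    rw [lindbladDual, Matrix.add_mul, Matrix.sum_mul, Matrix.trace_add, Matrix.trace_sum]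
  have hS : ∑ β, ((Vᴴ * ((h β)ᴴ * V * h β
        - (1/2:ℂ) • ((h β)ᴴ * h β * V + V * ((h β)ᴴ * h β)))).trace
      + (((h β)ᴴ * Vᴴ * h β
        - (1/2:ℂ) • ((h β)ᴴ * h β * Vᴴ + Vᴴ * ((h β)ᴴ * h β))) * V).trace
      + ((h β * V - V * h β)ᴴ * (h β * V - V * h β)).trace) = 0 :=
    Finset.sum_eq_zero fun β _ => per_alpha' V (h β) (hP β)
  rw [Finset.sum_add_distrib, Finset.sum_add_distrib] at hS
  have main : (Vᴴ * lindbladDual H h V).trace + (lindbladDual H h Vᴴ * V).trace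
      + ∑ β, ((h β * V - V * h β)ᴴ * (h β * V - V * h β)).trace = 0 := by
    rw [e1, e2]
    linear_combination ham_part' H V + hS
  have hzero : (Vᴴ * lindbladDual H h V).trace + (lindbladDual H h Vᴴ * V).trace = 0 := by
    rw [← lindbladDual_conjT' hH, hDV, Matrix.conjTranspose_smul, hc]
    simp only [Matrix.mul_smul, Matrix.neg_mul, Matrix.smul_mul, Matrix.trace_neg,
      Matrix.trace_smul, smul_eq_mul, neg_smul]
    ring
  have hsum0 : ∑ β, ((h β * V - V * h β)ᴴ * (h β * V - V * h β)).trace = 0 := by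
    linear_combination main - hzero
  have h0 := (Finset.sum_eq_zero_iff_of_nonneg
    (fun β _ => trace_sq_nonneg' (h β * V - V * h β))).mp hsum0 α (Finset.mem_univ α)
  have := eq_zero_of_trace_sq' h0
  rwa [sub_eq_zero] at this

/-- If `D† F = i r F` with `F = P_ℓ F P_j` supported between two enclosures and
`V = F / ‖F†F‖^{1/2}` is a partial isometry with `V†V = P_j`, `V V† = P_ℓ`, then
`h_α V = V h_α` for all `α` and `H V = V (H + r)`. -/
theorem stmt16 {n : ℕ} {ι : Type*} [Fintype ι]
    (H : Matrix (Fin n) (Fin n) ℂ) (hH : H.IsHermitian)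
    (h : ι → Matrix (Fin n) (Fin n) ℂ)
    (Pj Pl : Matrix (Fin n) (Fin n) ℂ)
    (hPj : Pj * Pj = Pj) (hPjh : Pjᴴ = Pj) (hPl : Pl * Pl = Pl) (hPlh : Plᴴ = Pl)
    (hPjH : Pj * H = H * Pj) (hPjhα : ∀ α, Pj * h α = h α * Pj)
    (hPlH : Pl * H = H * Pl) (hPlhα : ∀ α, Pl * h α = h α * Pl)
    (F : Matrix (Fin n) (Fin n) ℂ) (r : ℝ)
    (hF : lindbladDual H h F = (Complex.I * (r : ℂ)) • F)
    (hFsupp : F = Pl * F * Pj)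
    (V : Matrix (Fin n) (Fin n) ℂ)
    (hV : V = ((Real.sqrt ‖Fᴴ * F‖ : ℝ) : ℂ)⁻¹ • F)
    (hViso : Vᴴ * V = Pj) (hViso' : V * Vᴴ = Pl) :
    (∀ α, h α * V = V * h α) ∧ H * V = V * (H + (r : ℂ) • 1) := by
  have hHe : Hᴴ = H := hH
  have hDV : lindbladDual H h V = (Complex.I * (r : ℂ)) • V := by
    rw [hV, lindbladDual_smul', hF]
    exact smul_comm _ _ F
  have hc : star (Complex.I * (r : ℂ)) = -(Complex.I * (r : ℂ)) := by
    rw [star_mul']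
    simp [Complex.star_def, Complex.conj_I, Complex.conj_ofReal, mul_comm]
  have hP : ∀ α, (h α)ᴴ * (Vᴴ * V) = Vᴴ * V * (h α)ᴴ := by
    intro α
    rw [hViso, ← hPjh, ← conjTranspose_mul, ← conjTranspose_mul, hPjhα]
  have hcomm : ∀ α, h α * V = V * h α := fun α => core' hHe h V _ hc hP hDV α
  have hDV' : lindbladDual H h Vᴴ = (-(Complex.I * (r : ℂ))) • Vᴴ := by
    rw [← lindbladDual_conjT' hHe, hDV, Matrix.conjTranspose_smul, hc]
  have hc' : star (-(Complex.I * (r : ℂ))) = -(-(Complex.I * (r : ℂ))) := by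
    rw [star_neg, hc]
  have hP' : ∀ α, (h α)ᴴ * ((Vᴴ)ᴴ * Vᴴ) = (Vᴴ)ᴴ * Vᴴ * (h α)ᴴ := by
    intro α
    rw [conjTranspose_conjTranspose, hViso', ← hPlh, ← conjTranspose_mul,
      ← conjTranspose_mul, hPlhα]
  have hcomm2 : ∀ α, h α * Vᴴ = Vᴴ * h α := fun α => core' hHe h Vᴴ _ hc' hP' hDV' α
  refine ⟨hcomm, ?_⟩
  have hhV : ∀ α, (h α)ᴴ * V = V * (h α)ᴴ := by
    intro α
    have := congrArg conjTranspose (hcomm2 α)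
    simpa [conjTranspose_mul] using this.symm
  have hdiss : ∀ α, (h α)ᴴ * V * h α
      - (1/2:ℂ) • ((h α)ᴴ * h α * V + V * ((h α)ᴴ * h α)) = 0 := by
    intro α
    rw [mul_assoc ((h α)ᴴ) (h α) V, hcomm α, ← mul_assoc, ← mul_assoc, hhV]
    module
  have hs : ∑ α, ((h α)ᴴ * V * h α
      - (1/2:ℂ) • ((h α)ᴴ * h α * V + V * ((h α)ᴴ * h α))) = 0 :=
    Finset.sum_eq_zero fun α _ => hdiss α
  rw [lindbladDual, hs, add_zero] at hDV
  have h2 : ((-Complex.I) * Complex.I) • (H * V - V * H)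
      = ((-Complex.I) * (Complex.I * (r:ℂ))) • V := by
    rw [← smul_smul, ← smul_smul, hDV]
  have e : (-Complex.I) * Complex.I = 1 := by
    simp [Complex.I_mul_I]
  have e2 : (-Complex.I) * (Complex.I * (r:ℂ)) = (r:ℂ) := by
    rw [← mul_assoc, e, one_mul]
  rw [e, e2, one_smul] at h2
  rw [Matrix.mul_add, Matrix.mul_smul, Matrix.mul_one, ← h2]
  abel
end
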